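/- arXiv:1010.1842 — 5 statements merged into one kernel-verified Lean document; each statement's English description precedes it below -/
import Mathlib

section
/- With (a₁, a₂, a₃, a₄, a₅, a₆, a₇) = (16, −16, −8, −16, −4, −4, 2), one has π² = Σ_{n=0}^∞ (1/16ⁿ) · Σ_{r=1}^{7} aᵣ/(8n+r)². -/
set_option linter.unusedTactic false


/-- The BBP-type coefficients `(a₁, …, a₇) = (16, −16, −8, −16, −4, −4, 2)`. -/
def a : ℕ → ℝ
  | 1 => 16
  | 2 => -16
  | 3 => -8
  | 4 => -16
  | 5 => -4
  | 6 => -4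
  | 7 => 2
  | _ => 0

open Filter Set Complex

noncomputable section

def li2 (z : ℂ) : ℂ := ∑' k : ℕ, z ^ k / (k : ℂ) ^ 2

lemma norm_li2_term_le {z : ℂ} (hz : ‖z‖ ≤ 1) (k : ℕ) :
    ‖z ^ k / (k : ℂ) ^ 2‖ ≤ 1 / (k : ℝ) ^ 2 := by
  rcases Nat.eq_zero_or_pos k with rfl | hk
  · simp
  rw [norm_div, norm_pow, norm_pow, Complex.norm_natCast]
  have h2 : (0:ℝ) < (k:ℝ) ^ 2 := by positivity
  gcongr
  exact pow_le_one₀ (norm_nonneg _) hz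

lemma summable_u : Summable (fun k : ℕ => 1 / (k : ℝ) ^ 2) :=
  Real.summable_one_div_nat_pow.mpr one_lt_two

lemma hasSum_li2 {z : ℂ} (hz : ‖z‖ ≤ 1) :
    HasSum (fun k : ℕ => z ^ k / (k : ℂ) ^ 2) (li2 z) :=
  ((summable_u.of_norm_bounded (norm_li2_term_le hz))).hasSum

lemma continuousOn_li2 : ContinuousOn li2 (Metric.closedBall 0 1) := by
  apply (tendstoUniformlyOn_tsum summable_u
    (fun k x hx => norm_li2_term_le (by simpa using hx) k)).continuousOn
  exact (Filter.Eventually.of_forall fun t =>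
    continuousOn_finset_sum t fun k _ => (Continuous.continuousOn (by fun_prop))).frequently

lemma continuousAt_li2 {w : ℂ} (hw : ‖w‖ < 1) : ContinuousAt li2 w := by
  refine continuousOn_li2.continuousAt ?_
  exact Filter.mem_of_superset (Metric.isOpen_ball.mem_nhds (by simpa using hw))
    Metric.ball_subset_closedBall

lemma li2_zero : li2 0 = 0 := by
  have h : ∀ k : ℕ, (0:ℂ) ^ k / (k : ℂ) ^ 2 = 0 := by
    intro k
    rcases Nat.eq_zero_or_pos k with rfl | hk
    · simp
    · rw [zero_pow hk.ne']; simp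
  simp [li2, h, tsum_zero]

lemma li2_one : li2 1 = ((Real.pi ^ 2 / 6 : ℝ) : ℂ) := by
  have h2 : HasSum (fun k : ℕ => (1:ℂ) ^ k / (k : ℂ) ^ 2) ((Real.pi ^ 2 / 6 : ℝ) : ℂ) := by
    refine (Complex.hasSum_ofReal.mpr hasSum_zeta_two).congr_fun fun k => ?_
    push_cast
    simp
  exact h2.tsum_eq

lemma li2_hasDerivAt {z : ℂ} (hz : ‖z‖ < 1) (h0 : z ≠ 0) :
    HasDerivAt li2 (-Complex.log (1 - z) / z) z := by
  set r : ℝ := (1 + ‖z‖) / 2 with hr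
  have hn0 : (0:ℝ) ≤ ‖z‖ := norm_nonneg z
  have hr0 : 0 < r := by rw [hr]; linarith
  have hr1 : r < 1 := by rw [hr]; linarith
  have hzr : ‖z‖ < r := by rw [hr]; linarith
  have key : HasDerivAt li2
      ((fun w : ℂ => ∑' k : ℕ, (k : ℂ) * w ^ (k - 1) / (k : ℂ) ^ 2) z) z := by
    refine hasDerivAt_of_tendstoUniformlyOn (𝕜 := ℂ) (l := atTop)
      (f := fun (t : Finset ℕ) (w : ℂ) => ∑ k ∈ t, w ^ k / (k : ℂ) ^ 2)
      (f' := fun (t : Finset ℕ) (w : ℂ) => ∑ k ∈ t, (k : ℂ) * w ^ (k - 1) / (k : ℂ) ^ 2)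
      (g := li2) (g' := fun w : ℂ => ∑' k : ℕ, (k : ℂ) * w ^ (k - 1) / (k : ℂ) ^ 2)
      (Metric.isOpen_ball (x := (0:ℂ)) (ε := r)) ?_ ?_ ?_ ?_
    · apply tendstoUniformlyOn_tsum (u := fun k : ℕ => r ^ k / r)
        ((summable_geometric_of_lt_one hr0.le hr1).div_const r)
      intro k x hx
      have hxr : ‖x‖ ≤ r := le_of_lt (by simpa using hx)
      rcases Nat.eq_zero_or_pos k with rfl | hk
      · simp; positivity
      rw [norm_div, norm_mul, norm_pow, norm_pow, Complex.norm_natCast]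
      have hk1 : (1:ℝ) ≤ (k:ℝ) := by exact_mod_cast hk
      have e1 : (k:ℝ) * ‖x‖ ^ (k-1) / (k:ℝ)^2 = ‖x‖^(k-1) / k := by
        field_simp
      rw [e1]
      have e2 : ‖x‖ ^ (k-1) / (k:ℝ) ≤ r ^ (k-1) := by
        have h3 : ‖x‖ ^ (k-1) ≤ r ^ (k-1) := pow_le_pow_left₀ (norm_nonneg _) hxr _
        calc ‖x‖ ^ (k-1) / (k:ℝ) ≤ ‖x‖ ^ (k-1) / 1 := by gcongr
          _ = ‖x‖ ^ (k-1) := by ring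
          _ ≤ r ^ (k-1) := h3
      refine e2.trans ?_
      have h4 : r ^ (k - 1) = r ^ k / r := by
        rw [eq_div_iff hr0.ne', ← pow_succ]
        congr 1
        omega
      rw [h4]
    · refine Filter.Eventually.of_forall fun t x _ => ?_
      exact HasDerivAt.fun_sum fun k _ => (hasDerivAt_pow k x).div_const _
    · intro x hx
      exact hasSum_li2 (le_of_lt ((by simpa using hx : ‖x‖ < r).trans hr1))
    · simpa using hzr
  have hsum : HasSum (fun k : ℕ => (k : ℂ) * z ^ (k - 1) / (k : ℂ) ^ 2)
      (-Complex.log (1 - z) / z) := by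
    have h := (Complex.hasSum_taylorSeries_neg_log hz).div_const z
    refine h.congr_fun fun k => ?_
    rcases k with _ | m
    · simp
    · have hm : ((m + 1 : ℕ) : ℂ) ≠ 0 := Nat.cast_ne_zero.mpr (Nat.succ_ne_zero m)
      push_cast at hm
      push_cast
      field_simp
      ring
  simpa only [hsum.tsum_eq] using key


lemma norm_one_sub_mul_lt {γ : ℂ} (h4 : ‖1 - γ‖ < 1) {t : ℝ} (ht0 : 0 < t) (ht1 : t ≤ 1) :
    ‖1 - γ * (t:ℂ)‖ < 1 := by
  have e : (1 : ℂ) - γ * t = ((1 - t : ℝ) : ℂ) + (t : ℂ) * (1 - γ) := by push_cast; ring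
  rw [e]
  calc ‖((1-t:ℝ):ℂ) + (t:ℂ)*(1-γ)‖ ≤ ‖((1-t:ℝ):ℂ)‖ + ‖(t:ℂ)*(1-γ)‖ := norm_add_le _ _
    _ = |1-t| + |t| * ‖1-γ‖ := by
        rw [norm_mul, Complex.norm_real, Complex.norm_real, Real.norm_eq_abs, Real.norm_eq_abs]
    _ = (1-t) + t * ‖1-γ‖ := by rw [_root_.abs_of_nonneg (by linarith), _root_.abs_of_pos ht0]
    _ < (1-t) + t * 1 := by have := mul_lt_mul_of_pos_left h4 ht0; linarith
    _ = 1 := by ring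

lemma li2_reflection {γ : ℂ} (h1 : 0 < γ.re) (h2 : γ.re < 1) (h3 : ‖γ‖ < 1)
    (h4 : ‖1 - γ‖ < 1) :
    li2 γ + li2 (1 - γ) = ((Real.pi ^ 2 / 6 : ℝ) : ℂ) - Complex.log γ * Complex.log (1 - γ) := by
  have hγ0 : γ ≠ 0 := fun h => by simp [h] at h1
  set Φ : ℝ → ℂ := fun t => li2 (γ * (t:ℂ)) + li2 (1 - γ * (t:ℂ)) +
      Complex.log (γ * (t:ℂ)) * Complex.log (1 - γ * (t:ℂ)) with hΦ
  have hre1 : ∀ t : ℝ, 0 < t → 0 < (γ * (t:ℂ)).re := by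
    intro t ht
    simp only [Complex.mul_re, Complex.ofReal_re, Complex.ofReal_im, mul_zero, sub_zero]
    positivity
  have hre2 : ∀ t : ℝ, t ≤ 1 → 0 < ((1:ℂ) - γ * (t:ℂ)).re := by
    intro t ht
    simp only [Complex.sub_re, Complex.one_re, Complex.mul_re, Complex.ofReal_re,
      Complex.ofReal_im, mul_zero, sub_zero]
    nlinarith
  have hzt1 : ∀ t : ℝ, 0 ≤ t → t ≤ 1 → ‖γ * (t:ℂ)‖ < 1 := by
    intro t ht0 ht1
    rw [norm_mul, Complex.norm_real, Real.norm_eq_abs, _root_.abs_of_nonneg ht0]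
    nlinarith [norm_nonneg γ]
  have hzt0 : ∀ t : ℝ, 0 < t → γ * (t:ℂ) ≠ 0 := by
    intro t ht
    exact mul_ne_zero hγ0 (by exact_mod_cast ht.ne')
  have hwt0 : ∀ t : ℝ, t ≤ 1 → (1:ℂ) - γ * (t:ℂ) ≠ 0 := by
    intro t ht h
    have := hre2 t ht
    rw [h] at this
    simp at this
  -- inner derivative helpers
  have hinner : ∀ t : ℝ, HasDerivAt (fun w : ℂ => γ * w) γ (t:ℂ) := by
    intro t
    simpa using (hasDerivAt_id ((t:ℝ):ℂ)).const_mul γ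
  have hinner2 : ∀ t : ℝ, HasDerivAt (fun w : ℂ => 1 - γ * w) (-γ) (t:ℂ) := by
    intro t
    simpa using ((hasDerivAt_id ((t:ℝ):ℂ)).const_mul γ).const_sub 1
  have hderiv : ∀ t : ℝ, 0 < t → t < 1 → HasDerivAt Φ 0 t := by
    intro t ht0 ht1
    have hA : ‖γ * (t:ℂ)‖ < 1 := hzt1 t ht0.le ht1.le
    have hA0 : γ * (t:ℂ) ≠ 0 := hzt0 t ht0
    have hB : ‖(1:ℂ) - γ * (t:ℂ)‖ < 1 := norm_one_sub_mul_lt h4 ht0 ht1.le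
    have hB0 : (1:ℂ) - γ * (t:ℂ) ≠ 0 := hwt0 t ht1.le
    have hs1 : γ * (t:ℂ) ∈ Complex.slitPlane := Complex.mem_slitPlane_iff.mpr
      (Or.inl (hre1 t ht0))
    have hs2 : (1:ℂ) - γ * (t:ℂ) ∈ Complex.slitPlane := Complex.mem_slitPlane_iff.mpr
      (Or.inl (hre2 t ht1.le))
    have d1 : HasDerivAt (fun s : ℝ => li2 (γ * (s:ℂ)))
        (-Complex.log (1 - γ * (t:ℂ)) / (γ * (t:ℂ)) * γ) t := by
      exact ((li2_hasDerivAt hA hA0).comp (t:ℂ) (hinner t)).comp_ofReal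
    have d2 : HasDerivAt (fun s : ℝ => li2 (1 - γ * (s:ℂ)))
        (-Complex.log (γ * (t:ℂ)) / (1 - γ * (t:ℂ)) * (-γ)) t := by
      have h5 : ‖(1:ℂ) - γ * (t:ℂ)‖ < 1 := hB
      have := ((li2_hasDerivAt h5 hB0).comp (t:ℂ) (hinner2 t)).comp_ofReal
      have e : (1:ℂ) - (1 - γ * (t:ℂ)) = γ * (t:ℂ) := by ring
      rw [e] at this
      exact this
    have d3 : HasDerivAt (fun s : ℝ => Complex.log (γ * (s:ℂ)))
        ((γ * (t:ℂ))⁻¹ * γ) t :=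
      ((Complex.hasDerivAt_log hs1).comp (t:ℂ) (hinner t)).comp_ofReal
    have d4 : HasDerivAt (fun s : ℝ => Complex.log (1 - γ * (s:ℂ)))
        (((1:ℂ) - γ * (t:ℂ))⁻¹ * (-γ)) t :=
      by have := ((Complex.hasDerivAt_log hs2).comp (t:ℂ) (hinner2 t)).comp_ofReal; exact this
    have dmul := d3.mul d4
    have dtot := (d1.add d2).add dmul
    have : (-Complex.log (1 - γ * (t:ℂ)) / (γ * (t:ℂ)) * γ +
        -Complex.log (γ * (t:ℂ)) / (1 - γ * (t:ℂ)) * (-γ)) +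
        ((γ * (t:ℂ))⁻¹ * γ * Complex.log (1 - γ * (t:ℂ)) +
          Complex.log (γ * (t:ℂ)) * (((1:ℂ) - γ * (t:ℂ))⁻¹ * (-γ))) = 0 := by
      field_simp
      ring
    rw [this] at dtot
    exact dtot
  have hconst : ∀ t : ℝ, t ∈ Ioc (0:ℝ) 1 → Φ 1 = Φ t := by
    intro t ht
    have hcont : ContinuousOn Φ (Icc t 1) := by
      intro s hs
      have hs0 : 0 < s := lt_of_lt_of_le ht.1 hs.1
      have hs1' : s ≤ 1 := hs.2
      have cA : ContinuousAt (fun u : ℝ => γ * (u:ℂ)) s :=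
        (continuous_const.mul Complex.continuous_ofReal).continuousAt
      have cB : ContinuousAt (fun u : ℝ => (1:ℂ) - γ * (u:ℂ)) s :=
        (continuous_const.sub (continuous_const.mul Complex.continuous_ofReal)).continuousAt
      refine ContinuousAt.continuousWithinAt ?_
      refine ContinuousAt.add (ContinuousAt.add ?_ ?_) (ContinuousAt.mul ?_ ?_)
      · exact ContinuousAt.comp (g := li2) (continuousAt_li2 (hzt1 s hs0.le hs1')) cA
      · exact ContinuousAt.comp (g := li2) (continuousAt_li2 (norm_one_sub_mul_lt h4 hs0 hs1')) cB
      · exact ContinuousAt.comp (g := Complex.log) (continuousAt_clog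
          (Complex.mem_slitPlane_iff.mpr (Or.inl (hre1 s hs0)))) cA
      · exact ContinuousAt.comp (g := Complex.log) (continuousAt_clog
          (Complex.mem_slitPlane_iff.mpr (Or.inl (hre2 s hs1')))) cB
    have hder : ∀ x ∈ Ico t 1, HasDerivWithinAt Φ 0 (Ici x) x := by
      intro x hx
      exact (hderiv x (lt_of_lt_of_le ht.1 hx.1) hx.2).hasDerivWithinAt
    exact constant_of_has_deriv_right_zero hcont hder 1 (right_mem_Icc.mpr ht.2)
  -- limit as t → 0⁺
  have hL1 : Tendsto (fun t : ℝ => li2 (γ * (t:ℂ))) (nhdsWithin 0 (Ioi 0)) (nhds 0) := by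
    have : ContinuousAt (fun t : ℝ => li2 (γ * (t:ℂ))) 0 := by
      refine ContinuousAt.comp (g := li2) (continuousAt_li2 ?_)
        ((continuous_const.mul Complex.continuous_ofReal).continuousAt)
      simp
    have h := this.tendsto.mono_left (nhdsWithin_le_nhds (s := Ioi 0))
    simpa [li2_zero] using h
  have hL2 : Tendsto (fun t : ℝ => li2 (1 - γ * (t:ℂ))) (nhdsWithin 0 (Ioi 0))
      (nhds ((Real.pi ^ 2 / 6 : ℝ) : ℂ)) := by
    have hpath : Tendsto (fun t : ℝ => (1:ℂ) - γ * (t:ℂ)) (nhdsWithin 0 (Ioi 0))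
        (nhdsWithin 1 (Metric.closedBall 0 1)) := by
      apply tendsto_nhdsWithin_of_tendsto_nhds_of_eventually_within
      · have : ContinuousAt (fun t : ℝ => (1:ℂ) - γ * (t:ℂ)) 0 :=
          (continuous_const.sub (continuous_const.mul Complex.continuous_ofReal)).continuousAt
        have h := this.tendsto.mono_left (nhdsWithin_le_nhds (s := Ioi 0))
        simpa using h
      · filter_upwards [Ioc_mem_nhdsGT_of_mem (Set.left_mem_Ico.mpr one_pos)] with
          x hx
        exact Metric.mem_closedBall.mpr (by
          simpa using (norm_one_sub_mul_lt h4 hx.1 hx.2).le)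
    have hcw : ContinuousWithinAt li2 (Metric.closedBall 0 1) 1 :=
      continuousOn_li2 1 (by simp)
    have := hcw.tendsto.comp hpath
    rwa [li2_one] at this
  have hL3 : Tendsto (fun t : ℝ => Complex.log (γ * (t:ℂ)) * Complex.log (1 - γ * (t:ℂ)))
      (nhdsWithin 0 (Ioi 0)) (nhds 0) := by
    have T0 : Tendsto (fun t : ℝ => Complex.log (1 - γ * (t:ℂ))) (nhdsWithin 0 (Ioi 0))
        (nhds 0) := by
      have hc : ContinuousAt (fun t : ℝ => Complex.log (1 - γ * (t:ℂ))) 0 := by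
        refine ContinuousAt.comp (g := Complex.log) (continuousAt_clog ?_)
          ((continuous_const.sub (continuous_const.mul Complex.continuous_ofReal)).continuousAt)
        simp [Complex.mem_slitPlane_iff]
      have h := hc.tendsto.mono_left (nhdsWithin_le_nhds (s := Ioi 0))
      simpa using h
    have TB : Tendsto (fun t : ℝ => ((t:ℂ))⁻¹ * Complex.log (1 - γ * (t:ℂ)))
        (nhdsWithin 0 (Ioi 0)) (nhds (-γ)) := by
      have hd : HasDerivAt (fun s : ℝ => Complex.log (1 - γ * (s:ℂ))) (-γ) 0 := by
        have := ((Complex.hasDerivAt_log (by simp [Complex.mem_slitPlane_iff] :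
            (1:ℂ) - γ * ((0:ℝ):ℂ) ∈ Complex.slitPlane)).comp ((0:ℝ):ℂ)
            (hinner2 0)).comp_ofReal
        simpa using this
      have hslope := hasDerivAt_iff_tendsto_slope.mp hd
      have hmono : nhdsWithin (0:ℝ) (Ioi 0) ≤ nhdsWithin (0:ℝ) {(0:ℝ)}ᶜ :=
        nhdsWithin_mono 0 (fun x hx => ne_of_gt hx)
      refine (hslope.mono_left hmono).congr ?_
      intro s
      have h0 : Complex.log (1 - γ * ((0:ℝ):ℂ)) = 0 := by simp
      simp only [slope_def_module, h0]
      rw [sub_zero, sub_zero, Complex.real_smul, Complex.ofReal_inv]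
    have TA : Tendsto (fun t : ℝ => ((Real.log t : ℂ) * (t : ℂ))) (nhdsWithin 0 (Ioi 0))
        (nhds 0) := by
      have h := tendsto_log_mul_rpow_nhdsGT_zero one_pos
      simp only [Real.rpow_one] at h
      have h2 := (Complex.continuous_ofReal.tendsto 0).comp h
      have h3 : Tendsto (fun t : ℝ => ((Real.log t * t : ℝ) : ℂ)) (nhdsWithin 0 (Ioi 0))
          (nhds 0) := by simpa [Function.comp_def] using h2
      refine h3.congr fun t => ?_
      push_cast
      ring
    have Tprod := TA.mul TB
    rw [zero_mul] at Tprod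
    have T2 : Tendsto (fun t : ℝ => Complex.log γ * Complex.log (1 - γ * (t:ℂ)))
        (nhdsWithin 0 (Ioi 0)) (nhds 0) := by
      have := T0.const_mul (Complex.log γ)
      simpa using this
    have Tsum := Tprod.add T2
    rw [add_zero] at Tsum
    refine Tsum.congr' ?_
    filter_upwards [eventually_mem_nhdsWithin] with t (ht : t ∈ Ioi 0)
    have ht0 : (0:ℝ) < t := ht
    have hlog : Complex.log (γ * (t:ℂ)) = (Real.log t : ℂ) + Complex.log γ := by
      rw [mul_comm]
      exact Complex.log_ofReal_mul ht0 hγ0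
    have htne : ((t:ℝ):ℂ) ≠ 0 := by exact_mod_cast ht0.ne'
    rw [hlog]
    field_simp
  have hlim : Tendsto Φ (nhdsWithin 0 (Ioi 0)) (nhds ((Real.pi ^ 2 / 6 : ℝ) : ℂ)) := by
    have := (hL1.add hL2).add hL3
    simpa using this
  have hlim2 : Tendsto Φ (nhdsWithin 0 (Ioi 0)) (nhds (Φ 1)) := by
    refine tendsto_const_nhds.congr' ?_
    filter_upwards [Ioc_mem_nhdsGT_of_mem (Set.left_mem_Ico.mpr one_pos)] with x hx
    exact (hconst x hx)
  have hkey : Φ 1 = ((Real.pi ^ 2 / 6 : ℝ) : ℂ) := tendsto_nhds_unique hlim2 hlim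
  have hΦ1 : Φ 1 = li2 γ + li2 (1 - γ) + Complex.log γ * Complex.log (1 - γ) := by
    simp [hΦ]
  rw [hΦ1] at hkey
  linear_combination hkey


def gam : ℂ := (1 + Complex.I) / 2
def del : ℂ := (1 - Complex.I) / 2

lemma del_eq : del = 1 - gam := by rw [gam, del]; ring

lemma gam_re : gam.re = 1/2 := by simp [gam]
lemma gam_im : gam.im = 1/2 := by simp [gam]
lemma del_re : del.re = 1/2 := by simp [del]

lemma normSq_gam : Complex.normSq gam = 1/2 := by
  rw [Complex.normSq_apply, gam_re, gam_im]; norm_num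

lemma normSq_del : Complex.normSq del = 1/2 := by
  rw [Complex.normSq_apply, del_re]; simp [del]; norm_num

lemma norm_gam_lt : ‖gam‖ < 1 := by
  have h : ‖gam‖ ^ 2 = 1/2 := by rw [Complex.sq_norm, normSq_gam]
  nlinarith [norm_nonneg gam]

lemma norm_del_lt : ‖del‖ < 1 := by
  have h : ‖del‖ ^ 2 = 1/2 := by rw [Complex.sq_norm, normSq_del]
  nlinarith [norm_nonneg del]

lemma arg_gam : gam.arg = Real.pi / 4 := by
  have hs : Real.sqrt 2 ^ 2 = 2 := Real.sq_sqrt (by norm_num)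
  have hs' : ((Real.sqrt 2 : ℝ) : ℂ) ^ 2 = 2 := by exact_mod_cast congrArg Complex.ofReal hs
  have hr : (0:ℝ) < Real.sqrt 2 / 2 := by positivity
  have heq : gam = ↑(Real.sqrt 2 / 2) *
      (Complex.cos ↑(Real.pi/4) + Complex.sin ↑(Real.pi/4) * Complex.I) := by
    rw [← Complex.ofReal_cos, ← Complex.ofReal_sin, Real.cos_pi_div_four, Real.sin_pi_div_four,
      gam]
    push_cast
    linear_combination (-(1+Complex.I)/4) * hs'
  rw [heq, Complex.arg_mul_cos_add_sin_mul_I hr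
    ⟨by nlinarith [Real.pi_pos], by nlinarith [Real.pi_pos]⟩]

lemma abs_gam : ‖gam‖ = Real.sqrt (1/2) := by
  rw [Complex.norm_def, normSq_gam]

lemma log_gam_re : (Complex.log gam).re = -(Real.log 2) / 2 := by
  rw [Complex.log_re, abs_gam, Real.log_sqrt (by norm_num)]
  rw [show (1/2 : ℝ) = 2⁻¹ by norm_num, Real.log_inv]

lemma log_gam_mul_log_del : Complex.log gam * Complex.log del =
    (((Real.log 2 / 2) ^ 2 + (Real.pi / 4) ^ 2 : ℝ) : ℂ) := by
  have hconj : (starRingEnd ℂ) gam = del := by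
    have h2 : (starRingEnd ℂ) (2:ℂ) = 2 := by
      rw [show (2:ℂ) = ((2:ℝ):ℂ) by norm_num, Complex.conj_ofReal]
    rw [gam, del, map_div₀, h2, map_add, map_one, Complex.conj_I]
    ring
  have harg : gam.arg ≠ Real.pi := by
    rw [arg_gam]
    nlinarith [Real.pi_pos]
  have h1 : Complex.log del = (starRingEnd ℂ) (Complex.log gam) := by
    rw [← hconj, Complex.log_conj _ harg]
  rw [h1, Complex.mul_conj]
  congr 1
  rw [Complex.normSq_apply, log_gam_re, Complex.log_im, arg_gam]
  ring

lemma li2_pair : li2 gam + li2 del =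
    ((Real.pi^2/6 - ((Real.log 2 / 2) ^ 2 + (Real.pi / 4) ^ 2) : ℝ) : ℂ) := by
  have h := li2_reflection (γ := gam) (by rw [gam_re]; norm_num) (by rw [gam_re]; norm_num)
    norm_gam_lt (by rw [← del_eq]; exact norm_del_lt)
  rw [← del_eq] at h
  rw [h, log_gam_mul_log_del]
  push_cast
  ring

lemma li2_half : li2 (1/2 : ℂ) = ((Real.pi^2/12 - (Real.log 2)^2/2 : ℝ) : ℂ) := by
  have hnorm : ‖(1/2 : ℂ)‖ < 1 := by
    rw [show (1/2:ℂ) = ((1/2:ℝ):ℂ) by norm_num, Complex.norm_real, Real.norm_eq_abs,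
      _root_.abs_of_pos (by norm_num : (0:ℝ) < 1/2)]
    norm_num
  have h := li2_reflection (γ := (1/2 : ℂ)) (by norm_num) (by norm_num) hnorm
    (by norm_num)
  have h12 : (1:ℂ) - 1/2 = 1/2 := by norm_num
  rw [h12] at h
  have hlog : Complex.log (1/2 : ℂ) = ((-(Real.log 2) : ℝ) : ℂ) := by
    rw [show (1/2:ℂ) = ((1/2:ℝ):ℂ) by norm_num, ← Complex.ofReal_log (by norm_num)]
    congr 1
    rw [show (1/2 : ℝ) = 2⁻¹ by norm_num, Real.log_inv]
  rw [hlog] at h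
  have h2 : li2 (1/2:ℂ) + li2 (1/2:ℂ) = 2 * li2 (1/2:ℂ) := by ring
  rw [h2] at h
  push_cast at h ⊢
  linear_combination h / 2

def Efun (k : ℕ) : ℂ := if k % 2 = 0 then 32 * (1/2 : ℂ) ^ (k / 2) else 0

lemma gam_sq : gam ^ 2 = Complex.I / 2 := by
  rw [gam]; linear_combination (1/4) * Complex.I_sq

lemma del_sq : del ^ 2 = -Complex.I / 2 := by
  rw [del]; linear_combination (1/4) * Complex.I_sq

lemma gam_pow_eight : gam ^ 8 = 1/16 := by
  calc gam ^ 8 = (gam^2)^4 := by ring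
    _ = (Complex.I/2)^4 := by rw [gam_sq]
    _ = 1/16 := by rw [div_pow, Complex.I_pow_four]; norm_num

lemma del_pow_eight : del ^ 8 = 1/16 := by
  calc del ^ 8 = (del^2)^4 := by ring
    _ = (-Complex.I/2)^4 := by rw [del_sq]
    _ = (Complex.I/2)^4 := by ring
    _ = 1/16 := by rw [div_pow, Complex.I_pow_four]; norm_num

lemma key_pow (n r : ℕ) (hr : r < 8) :
    16 * (gam ^ (8*n+r) + del ^ (8*n+r)) - Efun (8*n+r) =
      ((a r / 16 ^ n : ℝ) : ℂ) := by
  induction n with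
  | zero =>
    have hI := Complex.I_sq
    interval_cases r
    · show 16 * (gam ^ 0 + del ^ 0) - Efun 0 = ((a 0 / 16 ^ 0 : ℝ) : ℂ)
      rw [show a 0 = 0 from rfl, show Efun 0 = 32 * (1/2:ℂ)^0 from by simp [Efun]]
      norm_num
    · show 16 * (gam ^ 1 + del ^ 1) - Efun 1 = ((a 1 / 16 ^ 0 : ℝ) : ℂ)
      rw [show a 1 = 16 from rfl, show Efun 1 = 0 from by simp [Efun], gam, del]
      push_cast
      ring
    · show 16 * (gam ^ 2 + del ^ 2) - Efun 2 = ((a 2 / 16 ^ 0 : ℝ) : ℂ)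
      rw [show a 2 = -16 from rfl, show Efun 2 = 32 * (1/2:ℂ)^1 from by simp [Efun], gam, del]
      push_cast
      linear_combination (8 : ℂ) * hI
    · show 16 * (gam ^ 3 + del ^ 3) - Efun 3 = ((a 3 / 16 ^ 0 : ℝ) : ℂ)
      rw [show a 3 = -8 from rfl, show Efun 3 = 0 from by simp [Efun], gam, del]
      push_cast
      linear_combination (12 : ℂ) * hI
    · show 16 * (gam ^ 4 + del ^ 4) - Efun 4 = ((a 4 / 16 ^ 0 : ℝ) : ℂ)
      rw [show a 4 = -16 from rfl, show Efun 4 = 32 * (1/2:ℂ)^2 from by simp [Efun], gam, del]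
      push_cast
      linear_combination (2 * Complex.I^2 + 10) * hI
    · show 16 * (gam ^ 5 + del ^ 5) - Efun 5 = ((a 5 / 16 ^ 0 : ℝ) : ℂ)
      rw [show a 5 = -4 from rfl, show Efun 5 = 0 from by simp [Efun], gam, del]
      push_cast
      linear_combination (5 * Complex.I^2 + 5) * hI
    · show 16 * (gam ^ 6 + del ^ 6) - Efun 6 = ((a 6 / 16 ^ 0 : ℝ) : ℂ)
      rw [show a 6 = -4 from rfl, show Efun 6 = 32 * (1/2:ℂ)^3 from by simp [Efun], gam, del]
      push_cast
      linear_combination ((Complex.I^4 + 14*Complex.I^2 + 1)/2) * hI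
    · show 16 * (gam ^ 7 + del ^ 7) - Efun 7 = ((a 7 / 16 ^ 0 : ℝ) : ℂ)
      rw [show a 7 = 2 from rfl, show Efun 7 = 0 from by simp [Efun], gam, del]
      push_cast
      linear_combination ((7*Complex.I^4 + 28*Complex.I^2 - 7)/4) * hI
  | succ n ih =>
    have e8 : 8*(n+1)+r = (8*n+r)+8 := by ring
    rw [e8]
    have hm : ((8*n+r)+8) % 2 = (8*n+r) % 2 := by omega
    have hd : ((8*n+r)+8) / 2 = (8*n+r)/2 + 4 := by omega
    have hE : Efun ((8*n+r)+8) = Efun (8*n+r) * (1/16) := by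
      unfold Efun
      rw [hm, hd]
      split_ifs with h
      · rw [pow_add]
        ring
      · ring
    calc 16 * (gam ^ ((8*n+r)+8) + del ^ ((8*n+r)+8)) - Efun ((8*n+r)+8)
        = (16 * (gam ^ (8*n+r) + del ^ (8*n+r)) - Efun (8*n+r)) * (1/16) := by
          rw [pow_add gam (8*n+r) 8, pow_add del (8*n+r) 8, gam_pow_eight, del_pow_eight, hE]
          ring
      _ = ((a r / 16 ^ n : ℝ) : ℂ) * (1/16) := by rw [ih]
      _ = ((a r / 16 ^ (n+1) : ℝ) : ℂ) := by
          push_cast [pow_succ]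
          ring

lemma key (k : ℕ) : 16 * (gam ^ k + del ^ k) - Efun k =
    ((a (k % 8) / 16 ^ (k / 8) : ℝ) : ℂ) := by
  have h := key_pow (k/8) (k%8) (Nat.mod_lt _ (by norm_num))
  rwa [show 8*(k/8)+(k%8) = k from by omega] at h

lemma hasSum_G : HasSum (fun k : ℕ => Efun k / (k:ℂ)^2) (8 * li2 (1/2 : ℂ)) := by
  have hhalf : ‖(1/2 : ℂ)‖ ≤ 1 := by
    rw [show (1/2:ℂ) = ((1/2:ℝ):ℂ) by norm_num, Complex.norm_real, Real.norm_eq_abs,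
      _root_.abs_of_pos (by norm_num : (0:ℝ) < 1/2)]
    norm_num
  have h := (hasSum_li2 hhalf).mul_left 8
  have hinj : Function.Injective (fun m : ℕ => 2 * m) := fun x y hxy => by
    have h2 : 2 * x = 2 * y := hxy
    omega
  have hsupp : ∀ k ∉ Set.range (fun m : ℕ => 2*m), Efun k / (k:ℂ)^2 = 0 := by
    intro k hk
    have hodd : k % 2 ≠ 0 := by
      intro h2
      exact hk ⟨k/2, show 2*(k/2) = k by omega⟩
    simp [Efun, hodd]
  refine (Function.Injective.hasSum_iff hinj hsupp).mp ?_
  refine h.congr_fun fun m => ?_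
  show Efun (2*m) / ((2*m : ℕ):ℂ)^2 = 8 * ((1/2:ℂ)^m / (m:ℂ)^2)
  rcases Nat.eq_zero_or_pos m with rfl | hm
  · simp [Efun]
  · have h1 : (2*m) % 2 = 0 := by omega
    have h2 : (2*m) / 2 = m := by omega
    have hm0 : ((m:ℕ):ℂ) ≠ 0 := Nat.cast_ne_zero.mpr hm.ne'
    simp only [Efun, if_pos h1, h2]
    push_cast
    field_simp
    ring

lemma norm_gam_le : ‖gam‖ ≤ 1 := norm_gam_lt.le
lemma norm_del_le : ‖del‖ ≤ 1 := norm_del_lt.le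

lemma hasSum_main : HasSum
    (fun k : ℕ => 16 * (gam^k/(k:ℂ)^2 + del^k/(k:ℂ)^2) - Efun k/(k:ℂ)^2)
    (((Real.pi ^ 2 : ℝ)) : ℂ) := by
  have h := (((hasSum_li2 norm_gam_le).add (hasSum_li2 norm_del_le)).mul_left 16).sub hasSum_G
  have hval : 16 * (li2 gam + li2 del) - 8 * li2 (1/2 : ℂ) = ((Real.pi ^ 2 : ℝ) : ℂ) := by
    rw [li2_pair, li2_half]
    push_cast
    ring
  rwa [hval] at h

lemma hasSum_T : HasSum (fun k : ℕ => a (k % 8) / 16 ^ (k / 8) / (k:ℝ)^2) (Real.pi ^ 2) := by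
  rw [← Complex.hasSum_ofReal]
  refine hasSum_main.congr_fun fun k => ?_
  have hk := key k
  calc ((a (k % 8) / 16 ^ (k / 8) / (k:ℝ)^2 : ℝ) : ℂ)
      = ((a (k % 8) / 16 ^ (k / 8) : ℝ) : ℂ) / (k:ℂ)^2 := by push_cast; ring
    _ = (16 * (gam ^ k + del ^ k) - Efun k) / (k:ℂ)^2 := by rw [hk]
    _ = 16 * (gam^k/(k:ℂ)^2 + del^k/(k:ℂ)^2) - Efun k/(k:ℂ)^2 := by ring


/-- `π² = Σ_{n=0}^∞ (1/16ⁿ) · Σ_{r=1}^{7} aᵣ/(8n+r)²`. -/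
theorem stmt_1 :
    HasSum (fun n : ℕ =>
      (1 / 16 ^ n : ℝ) * ∑ r ∈ Finset.Icc 1 7, a r / (8 * (n : ℝ) + r) ^ 2)
      (Real.pi ^ 2) := by
  have h := (Nat.divModEquiv 8).symm.hasSum_iff.mpr hasSum_T
  refine h.prod_fiberwise fun n => ?_
  have hval : (∑ j : Fin 8, (fun p : ℕ × Fin 8 =>
        (fun k : ℕ => a (k % 8) / 16 ^ (k / 8) / (k:ℝ)^2) ((Nat.divModEquiv 8).symm p)) (n, j))
      = (1 / 16 ^ n : ℝ) * ∑ r ∈ Finset.Icc 1 7, a r / (8 * (n : ℝ) + r) ^ 2 := by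
    simp only [Nat.divModEquiv_symm_apply]
    rw [Fin.sum_univ_eight]
    rw [show ((0 : Fin 8) : ℕ) = 0 from rfl, show ((1 : Fin 8) : ℕ) = 1 from rfl,
      show ((2 : Fin 8) : ℕ) = 2 from rfl, show ((3 : Fin 8) : ℕ) = 3 from rfl,
      show ((4 : Fin 8) : ℕ) = 4 from rfl, show ((5 : Fin 8) : ℕ) = 5 from rfl,
      show ((6 : Fin 8) : ℕ) = 6 from rfl, show ((7 : Fin 8) : ℕ) = 7 from rfl]
    rw [show (n*8+0)%8 = 0 from by omega, show (n*8+1)%8 = 1 from by omega,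
      show (n*8+2)%8 = 2 from by omega, show (n*8+3)%8 = 3 from by omega,
      show (n*8+4)%8 = 4 from by omega, show (n*8+5)%8 = 5 from by omega,
      show (n*8+6)%8 = 6 from by omega, show (n*8+7)%8 = 7 from by omega]
    rw [show (n*8+0)/8 = n from by omega, show (n*8+1)/8 = n from by omega,
      show (n*8+2)/8 = n from by omega, show (n*8+3)/8 = n from by omega,
      show (n*8+4)/8 = n from by omega, show (n*8+5)/8 = n from by omega,
      show (n*8+6)/8 = n from by omega, show (n*8+7)/8 = n from by omega]
    rw [show a 0 = 0 from rfl]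
    rw [← Finset.Ico_add_one_right_eq_Icc, Finset.sum_Ico_eq_sum_range]
    norm_num [Finset.sum_range_succ]
    push_cast
    ring
  rw [← hval]
  exact hasSum_fintype _

end
end

section
/- For integers n ≥ 1 and k ≥ 2, one has log k − (H_{kn} − H_n) = ∫₀¹ (Q_k′(t)/Q_k(t)) · t^{nk} dt, where Q_k(t) = 1 + t + ⋯ + t^{k−1}. -/
open intervalIntegral

/-- The `n`-th harmonic number `Hₙ = Σ_{j=1}^n 1/j`. -/
noncomputable def H (n : ℕ) : ℝ := ∑ j ∈ Finset.range n, 1 / ((j : ℝ) + 1)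

/-- The polynomial `Q_k(t) = 1 + t + ⋯ + t^{k−1}`. -/
noncomputable def Q (k : ℕ) : ℝ → ℝ := fun t => ∑ i ∈ Finset.range k, t ^ i

lemma hasDerivAt_Q (k : ℕ) (t : ℝ) :
    HasDerivAt (Q k) (∑ i ∈ Finset.range k, (i : ℝ) * t ^ (i - 1)) t :=
  HasDerivAt.fun_sum fun i _ => hasDerivAt_pow i t

lemma deriv_Q (k : ℕ) :
    deriv (Q k) = fun t => ∑ i ∈ Finset.range k, (i : ℝ) * t ^ (i - 1) :=
  funext fun t => (hasDerivAt_Q k t).deriv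

lemma contQ (k : ℕ) : Continuous (Q k) :=
  continuous_finset_sum _ fun i _ => by continuity

lemma contDerivQ (k : ℕ) : Continuous (deriv (Q k)) := by
  rw [deriv_Q]
  exact continuous_finset_sum _ fun i _ => by continuity

lemma Qpos (k : ℕ) (hk : 1 ≤ k) {t : ℝ} (ht : 0 ≤ t) : 0 < Q k t := by
  unfold Q
  apply Finset.sum_pos' (fun i _ => pow_nonneg ht i)
  exact ⟨0, Finset.mem_range.2 (by omega), by simp⟩

/-- `(1 - t) * Q'(t) = Q(t) - k * t^(k-1)`. -/
lemma one_sub_mul_derivQ (k : ℕ) (t : ℝ) :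
    (1 - t) * deriv (Q k) t = Q k t - k * t ^ (k - 1) := by
  have h1 : HasDerivAt (fun t : ℝ => (t - 1) * Q k t)
      ((1 : ℝ) * Q k t + (t - 1) * deriv (Q k) t) t :=
    ((hasDerivAt_id t).sub_const 1).mul ((hasDerivAt_Q k t).congr_deriv (deriv_Q k ▸ rfl))
  have heq : (fun t : ℝ => (t - 1) * Q k t) = fun t : ℝ => t ^ k - 1 := by
    funext s
    rw [mul_comm]
    exact geom_sum_mul s k
  rw [heq] at h1
  have h2 : HasDerivAt (fun t : ℝ => t ^ k - 1) ((k : ℝ) * t ^ (k - 1)) t :=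
    (hasDerivAt_pow k t).sub_const 1
  have := h1.unique h2
  nlinarith [this]

lemma sum_range_mul_pow (k : ℕ) (t : ℝ) :
    ∀ n : ℕ, ∑ m ∈ Finset.range (n * k), t ^ m
      = (∑ j ∈ Finset.range n, t ^ (j * k)) * Q k t := by
  intro n
  induction n with
  | zero => simp
  | succ n ih =>
    rw [Nat.succ_mul, Finset.sum_range_add, ih, Finset.sum_range_succ, add_mul]
    congr 1
    unfold Q
    rw [Finset.mul_sum]
    exact Finset.sum_congr rfl fun i _ => by rw [pow_add]

lemma integral_pow01 (m : ℕ) : ∫ t in (0:ℝ)..1, t ^ m = 1 / ((m : ℝ) + 1) := by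
  rw [integral_pow]
  simp

/-- For `n ≥ 1`, `k ≥ 2`,
`log k − (H_{kn} − H_n) = ∫₀¹ (Q_k′(t)/Q_k(t)) · t^{nk} dt`. -/
theorem stmt_4 (n k : ℕ) (hn : 1 ≤ n) (hk : 2 ≤ k) :
    Real.log k - (H (k * n) - H n) =
      ∫ t in (0:ℝ)..1, (deriv (Q k) t / Q k t) * t ^ (n * k) := by
  have hk1 : 1 ≤ k := le_trans (by norm_num) hk
  -- the polynomial S
  set S : ℝ → ℝ := fun t => ∑ j ∈ Finset.range n, t ^ (j * k) with hS
  -- pointwise identity on [0,1]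
  have key : ∀ t ∈ Set.uIcc (0:ℝ) 1,
      (deriv (Q k) t / Q k t) * t ^ (n * k)
        = deriv (Q k) t / Q k t - (Q k t - k * t ^ (k - 1)) * S t := by
    intro t ht
    rw [Set.uIcc_of_le (by norm_num : (0:ℝ) ≤ 1)] at ht
    have hQt : Q k t ≠ 0 := (Qpos k hk1 ht.1).ne'
    have hgeom : (1 - t) * (Q k t * S t) = 1 - t ^ (n * k) := by
      have h1 : (1 - t) * Q k t = 1 - t ^ k := by
        have := geom_sum_mul t k
        unfold Q; nlinarith [this]
      have h2 : (1 - t ^ k) * S t = 1 - t ^ (n * k) := by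
        have := geom_sum_mul (t ^ k) n
        simp only [hS]
        have hrw : ∑ j ∈ Finset.range n, t ^ (j * k) = ∑ j ∈ Finset.range n, (t ^ k) ^ j :=
          Finset.sum_congr rfl fun j _ => by rw [← pow_mul, mul_comm]
        rw [hrw]
        have hp : (t ^ k) ^ n = t ^ (n * k) := by rw [← pow_mul, mul_comm]
        nlinarith [this, hp]
      calc (1 - t) * (Q k t * S t) = ((1 - t) * Q k t) * S t := by ring
        _ = (1 - t ^ k) * S t := by rw [h1]
        _ = 1 - t ^ (n * k) := h2
    have hd := one_sub_mul_derivQ k t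
    -- (Q - k t^{k-1}) * S = deriv Q * (1 - t) * S = deriv Q * (1 - t^{nk}) / Q
    have : (Q k t - k * t ^ (k - 1)) * S t * Q k t
        = deriv (Q k) t * (1 - t ^ (n * k)) := by
      rw [← hd, ← hgeom]; ring
    field_simp
    nlinarith [this]
  rw [intervalIntegral.integral_congr key]
  have hQne : ∀ t ∈ Set.uIcc (0:ℝ) 1, Q k t ≠ 0 := by
    intro t ht
    rw [Set.uIcc_of_le (by norm_num : (0:ℝ) ≤ 1)] at ht
    exact (Qpos k hk1 ht.1).ne'
  have hintF : IntervalIntegrable (fun t : ℝ => deriv (Q k) t / Q k t)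
      MeasureTheory.volume 0 1 :=
    (((contDerivQ k).continuousOn).div ((contQ k).continuousOn) hQne).intervalIntegrable
  have hcontG : Continuous fun t : ℝ => (Q k t - k * t ^ (k - 1)) * S t := by
    apply Continuous.mul
    · exact (contQ k).sub (by continuity)
    · exact continuous_finset_sum _ fun i _ => by continuity
  have hintG : IntervalIntegrable (fun t : ℝ => (Q k t - k * t ^ (k - 1)) * S t)
      MeasureTheory.volume 0 1 := hcontG.intervalIntegrable 0 1
  rw [intervalIntegral.integral_sub hintF hintG]
  -- first integral: log k
  have hlog : (∫ t in (0:ℝ)..1, deriv (Q k) t / Q k t) = Real.log k := by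
    have hFTC := intervalIntegral.integral_eq_sub_of_hasDerivAt
      (f := fun t => Real.log (Q k t))
      (f' := fun t => deriv (Q k) t / Q k t)
      (a := (0:ℝ)) (b := 1)
      (fun t ht => by
        have h := (hasDerivAt_Q k t).log (hQne t ht)
        simpa [deriv_Q k] using h)
      hintF
    rw [hFTC]
    have hQ1 : Q k 1 = k := by simp [Q]
    have hQ0 : Q k 0 = 1 := by
      unfold Q
      rw [Finset.sum_eq_single 0]
      · simp
      · intro i _ hi; exact zero_pow hi
      · intro h; exact absurd (Finset.mem_range.2 (by omega)) h
    rw [hQ1, hQ0, Real.log_one, sub_zero]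
  rw [hlog]
  -- second integral: H (k*n) - H n
  have hsecond : (∫ t in (0:ℝ)..1, (Q k t - k * t ^ (k - 1)) * S t)
      = H (k * n) - H n := by
    have hexp : ∀ t : ℝ, (Q k t - k * t ^ (k - 1)) * S t
        = (∑ m ∈ Finset.range (n * k), t ^ m)
          - (∑ j ∈ Finset.range n, (k : ℝ) * t ^ (k - 1 + j * k)) := by
      intro t
      rw [sum_range_mul_pow k t n]
      have : (∑ j ∈ Finset.range n, (k : ℝ) * t ^ (k - 1 + j * k))
          = (k : ℝ) * t ^ (k - 1) * S t := by
        simp only [hS, Finset.mul_sum]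
        exact Finset.sum_congr rfl fun j _ => by rw [pow_add]; ring
      rw [this]; ring
    simp only [hexp]
    rw [intervalIntegral.integral_sub
      ((continuous_finset_sum (Finset.range (n * k))
        (fun i _ => continuous_pow i)).intervalIntegrable 0 1)
      ((continuous_finset_sum (Finset.range n)
        (fun j _ => continuous_const.fun_mul (continuous_pow (k - 1 + j * k)))).intervalIntegrable 0 1),
      intervalIntegral.integral_finset_sum
        (fun i _ => (continuous_pow i).intervalIntegrable 0 1),
      intervalIntegral.integral_finset_sum
        (fun j _ => (continuous_const.fun_mul
          (continuous_pow (k - 1 + j * k))).intervalIntegrable 0 1)]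
    have h1 : (∑ m ∈ Finset.range (n * k), ∫ t in (0:ℝ)..1, t ^ m) = H (k * n) := by
      rw [mul_comm n k]
      unfold H
      exact Finset.sum_congr rfl fun m _ => integral_pow01 m
    have h2 : (∑ j ∈ Finset.range n, ∫ t in (0:ℝ)..1, (k : ℝ) * t ^ (k - 1 + j * k)) = H n := by
      unfold H
      refine Finset.sum_congr rfl fun j _ => ?_
      rw [intervalIntegral.integral_const_mul, integral_pow01]
      have hcast : ((k - 1 + j * k : ℕ) : ℝ) + 1 = (k : ℝ) * ((j : ℝ) + 1) := by
        push_cast [Nat.cast_sub hk1]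
        ring
      rw [hcast]
      have hk0 : (k : ℝ) ≠ 0 := Nat.cast_ne_zero.2 (by omega)
      have hj0 : (j : ℝ) + 1 ≠ 0 := by positivity
      field_simp
    rw [h1, h2]
  rw [hsecond]
end

section
/- For every integer k ≥ 2, one has ∫₀¹ Q_k(t)/(1+t^k) dt = (log 2)/k − (π/(2k²))·Σ_{j=0}^{k−1} (2j+1−k)·cot((2j+1)π/(2k)), where Q_k(t) = 1 + t + ⋯ + t^{k−1}. -/
open intervalIntegral

open Complex Finset Polynomial

noncomputable def th (k j : ℕ) : ℝ := (2 * j + 1) * Real.pi / k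

noncomputable def zt (k j : ℕ) : ℂ := Complex.exp ((th k j : ℝ) * Complex.I)

lemma zt_eq (k j : ℕ) :
    zt k j = (Complex.exp (2 * Real.pi * Complex.I / k)) ^ j
      * Complex.exp ((Real.pi / k : ℝ) * Complex.I) := by
  rw [zt, ← Complex.exp_nat_mul, ← Complex.exp_add]
  congr 1
  rw [th]
  push_cast
  ring

lemma eta_pow (k : ℕ) (hk : k ≠ 0) :
    (Complex.exp ((Real.pi / k : ℝ) * Complex.I)) ^ k = -1 := by
  rw [← Complex.exp_nat_mul]
  have : (k : ℂ) ≠ 0 := Nat.cast_ne_zero.mpr hk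
  have : (k : ℂ) * ((Real.pi / k : ℝ) * Complex.I) = Real.pi * Complex.I := by
    push_cast; field_simp
  rw [this, Complex.exp_pi_mul_I]

lemma zt_pow (k j : ℕ) (hk : k ≠ 0) : (zt k j) ^ k = -1 := by
  rw [zt_eq, mul_pow, ← pow_mul, mul_comm j k, pow_mul, eta_pow k hk]
  have h := Complex.exp_nat_mul (2 * Real.pi * Complex.I / k) k
  have hkc : (k : ℂ) ≠ 0 := Nat.cast_ne_zero.mpr hk
  have : ((k:ℂ)) * (2 * Real.pi * Complex.I / k) = 2 * Real.pi * Complex.I := by field_simp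
  rw [← h, this, Complex.exp_two_pi_mul_I, one_pow, one_mul]

lemma prod_zt (k : ℕ) (hk : k ≠ 0) (t : ℂ) :
    ∏ j ∈ range k, (t - zt k j) = t ^ k + 1 := by
  have hω : IsPrimitiveRoot (Complex.exp (2 * Real.pi * Complex.I / k)) k :=
    Complex.isPrimitiveRoot_exp k hk
  have hp := X_pow_sub_C_eq_prod hω (Nat.pos_of_ne_zero hk) (eta_pow k hk)
  have := congrArg (Polynomial.eval t) hp
  simp only [eval_sub, eval_pow, eval_X, eval_C, eval_prod] at this
  rw [sub_neg_eq_add] at this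
  rw [show ∏ j ∈ range k, (t - zt k j)
      = ∏ j ∈ range k, (t - Complex.exp (2 * Real.pi * Complex.I / k) ^ j
          * Complex.exp ((Real.pi / k : ℝ) * Complex.I)) from
    Finset.prod_congr rfl fun j _ => by rw [zt_eq]]
  exact this.symm

noncomputable def cf (k j : ℕ) : ℂ := -2 * zt k j / (k * (1 - zt k j))

lemma sub_zt_ne (k j : ℕ) (hk : k ≠ 0) (t : ℝ) (ht : 0 ≤ t) : (t : ℂ) - zt k j ≠ 0 := by
  intro h
  have hz : zt k j = (t : ℂ) := by linear_combination -h
  have := zt_pow k j hk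
  rw [hz, ← Complex.ofReal_pow] at this
  have h2 : (t : ℝ) ^ k = -1 := by
    exact_mod_cast this
  nlinarith [pow_nonneg ht k]

lemma one_add_pow_ne (k : ℕ) (t : ℝ) (ht : 0 ≤ t) : ((t : ℂ)) ^ k + 1 ≠ 0 := by
  rw [← Complex.ofReal_pow, show ((1:ℂ)) = ((1:ℝ):ℂ) from by norm_num,
    ← Complex.ofReal_add, Ne, Complex.ofReal_eq_zero]
  positivity

lemma sum_prod_erase (k : ℕ) (hk : k ≠ 0) (t : ℂ) :
    ∑ j ∈ range k, ∏ i ∈ (range k).erase j, (t - zt k i) = k * t ^ (k - 1) := by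
  have h1 : HasDerivAt (fun s : ℂ => ∏ j ∈ range k, (s - zt k j))
      (∑ j ∈ range k, (∏ i ∈ (range k).erase j, (t - zt k i)) • (1:ℂ)) t := by
    apply HasDerivAt.fun_finsetProd
    intro i _
    simpa using (hasDerivAt_id t).sub_const (zt k i)
  have h2 : HasDerivAt (fun s : ℂ => ∏ j ∈ range k, (s - zt k j)) (k * t ^ (k-1)) t := by
    have : HasDerivAt (fun s : ℂ => s ^ k + 1) (k * t ^ (k-1)) t := by
      simpa using (hasDerivAt_pow k t).add_const 1
    refine this.congr_of_eventuallyEq ?_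
    filter_upwards with s using (prod_zt k hk s)
  have := h1.unique h2
  simpa using this

lemma sum_inv (k : ℕ) (hk : k ≠ 0) (t : ℝ) (ht : 0 ≤ t) :
    ∑ j ∈ range k, ((t : ℂ) - zt k j)⁻¹ = k * (t:ℂ) ^ (k-1) / ((t:ℂ)^k + 1) := by
  have hP := prod_zt k hk (t : ℂ)
  have hne := one_add_pow_ne k t ht
  have key : ∀ j ∈ range k, ((t : ℂ) - zt k j)⁻¹
      = (∏ i ∈ (range k).erase j, ((t:ℂ) - zt k i)) / ((t:ℂ)^k + 1) := by
    intro j hj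
    have hd := sub_zt_ne k j hk t ht
    rw [← hP, ← Finset.mul_prod_erase _ _ hj, eq_div_iff
      (mul_ne_zero hd (Finset.prod_ne_zero_iff.mpr fun i _ => sub_zt_ne k i hk t ht))]
    field_simp
  rw [Finset.sum_congr rfl key, ← Finset.sum_div, sum_prod_erase k hk]

lemma sum_zt_div (k : ℕ) (hk : k ≠ 0) (t : ℝ) (ht : 0 ≤ t) :
    ∑ j ∈ range k, zt k j / ((t : ℂ) - zt k j) = -k / ((t:ℂ)^k + 1) := by
  have h1 : ∀ j ∈ range k, zt k j / ((t : ℂ) - zt k j)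
      = t * ((t : ℂ) - zt k j)⁻¹ - 1 := by
    intro j hj
    field_simp [sub_zt_ne k j hk t ht]
    ring
  rw [Finset.sum_congr rfl h1, Finset.sum_sub_distrib, ← Finset.mul_sum,
    sum_inv k hk t ht, Finset.sum_const, Finset.card_range]
  have hne := one_add_pow_ne k t ht
  have hkpos : 1 ≤ k := Nat.one_le_iff_ne_zero.mpr hk
  have hpow : (t:ℂ) * (t:ℂ)^(k-1) = (t:ℂ)^k := by
    rw [← pow_succ', Nat.sub_add_cancel hkpos]
  field_simp
  ring_nf
  rw [show (t:ℂ) * (t:ℂ)^(k-1) * (k:ℂ) = (t:ℂ)^k * k from by rw [hpow]]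
  ring

lemma one_sub_zt_ne (k j : ℕ) (hk : k ≠ 0) : (1 : ℂ) - zt k j ≠ 0 := by
  have := sub_zt_ne k j hk 1 zero_le_one
  simpa using this

lemma sum_zt_div_one (k : ℕ) (hk : k ≠ 0) :
    ∑ j ∈ range k, zt k j / (1 - zt k j) = -(k:ℂ) / 2 := by
  have := sum_zt_div k hk 1 zero_le_one
  simp only [Complex.ofReal_one, one_pow] at this
  rw [this]
  norm_num

lemma key_pointwise (k : ℕ) (hk : k ≠ 0) (t : ℝ) (ht0 : 0 ≤ t) (ht1 : t < 1) :
    ∑ j ∈ range k, cf k j / ((t:ℂ) - zt k j)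
      = ((Q k t / (1 + t ^ k) : ℝ) : ℂ) := by
  have hkc : (k : ℂ) ≠ 0 := Nat.cast_ne_zero.mpr hk
  have htne : (1 : ℂ) - (t : ℂ) ≠ 0 := by
    rw [sub_ne_zero]
    intro h
    have : (1:ℝ) = t := by exact_mod_cast h
    linarith
  have hper : ∀ j ∈ range k, cf k j / ((t:ℂ) - zt k j)
      = (-2 / (k * (1 - (t:ℂ)))) * (zt k j / ((t:ℂ) - zt k j) - zt k j / (1 - zt k j)) := by
    intro j _
    have h1 := one_sub_zt_ne k j hk
    have h2 := sub_zt_ne k j hk t ht0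
    rw [cf]
    field_simp
    ring
  rw [Finset.sum_congr rfl hper, ← Finset.mul_sum, Finset.sum_sub_distrib,
    sum_zt_div k hk t ht0, sum_zt_div_one k hk]
  have hQ : Q k t / (1 + t ^ k) = (1 - t^k) / ((1 - t) * (1 + t^k)) := by
    have h1t : t ≠ 1 := ne_of_lt ht1
    have h1t' : t - 1 ≠ 0 := sub_ne_zero.mpr h1t
    have h1t'' : (1:ℝ) - t ≠ 0 := sub_ne_zero.mpr (Ne.symm h1t)
    have h2 : (1:ℝ) + t ^ k ≠ 0 := by positivity
    rw [Q, geom_sum_eq h1t, div_div,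
      div_eq_div_iff (mul_ne_zero h1t' h2) (mul_ne_zero h1t'' h2)]
    ring
  rw [hQ]
  have hpow := one_add_pow_ne k t ht0
  have hpow' : (1:ℂ) + (t:ℂ) ^ k ≠ 0 := by rw [add_comm]; exact hpow
  push_cast
  have h3 : (-(k:ℂ) / ((t:ℂ)^k+1) - -(k:ℂ)/2) = ((k:ℂ)*((t:ℂ)^k - 1))/(2*((t:ℂ)^k+1)) := by
    field_simp
    ring
  rw [h3, div_mul_div_comm, div_eq_div_iff
    (by exact mul_ne_zero (mul_ne_zero hkc htne) (mul_ne_zero two_ne_zero hpow))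
    (mul_ne_zero htne hpow')]
  ring

lemma th_pos (k j : ℕ) (hk : k ≠ 0) : 0 < th k j := by
  have : (0:ℝ) < k := by exact_mod_cast Nat.pos_of_ne_zero hk
  rw [th]
  positivity

lemma th_lt (k j : ℕ) (hj : j < k) : th k j < 2 * Real.pi := by
  have hk : (0:ℝ) < k := by
    have : 0 < k := Nat.pos_of_ne_zero (by omega)
    exact_mod_cast this
  rw [th, div_lt_iff₀ hk]
  have : (2 * (j:ℝ) + 1) < 2 * k := by
    have : (j:ℝ) + 1 ≤ k := by exact_mod_cast hj
    linarith
  nlinarith [Real.pi_pos]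

lemma sin_half_pos (k j : ℕ) (hk : k ≠ 0) (hj : j < k) : 0 < Real.sin (th k j / 2) := by
  apply Real.sin_pos_of_pos_of_lt_pi
  · linarith [th_pos k j hk]
  · linarith [th_lt k j hj]

lemma log_neg_zt (k j : ℕ) (hk : k ≠ 0) (hj : j < k) :
    Complex.log (0 - zt k j) = ((th k j - Real.pi : ℝ)) * Complex.I := by
  have h1 : (0:ℂ) - zt k j = Complex.exp (((th k j - Real.pi : ℝ)) * Complex.I) := by
    rw [zero_sub, zt, Complex.ofReal_sub, sub_mul, Complex.exp_sub, Complex.exp_pi_mul_I]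
    ring
  rw [h1, Complex.log_exp]
  · simpa using by linarith [th_pos k j hk, Real.pi_pos]
  · simpa using by linarith [th_lt k j hj]

lemma one_sub_zt_eq (k j : ℕ) :
    1 - zt k j = (2 * Real.sin (th k j / 2) : ℝ) *
      Complex.exp (((th k j - Real.pi) / 2 : ℝ) * Complex.I) := by
  set θ := th k j
  have hζ : zt k j = (Real.cos θ : ℂ) + (Real.sin θ : ℝ) * Complex.I := by
    rw [zt, Complex.exp_mul_I]
    simp [Complex.ofReal_cos, Complex.ofReal_sin]
    rfl
  have hcos : Real.cos ((θ - Real.pi)/2) = Real.sin (θ/2) := by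
    rw [show (θ - Real.pi)/2 = θ/2 - Real.pi/2 by ring, Real.cos_sub]
    simp
  have hsin : Real.sin ((θ - Real.pi)/2) = - Real.cos (θ/2) := by
    rw [show (θ - Real.pi)/2 = θ/2 - Real.pi/2 by ring, Real.sin_sub]
    simp
  have h2 : Real.cos θ = 1 - 2 * Real.sin (θ/2)^2 := by
    nth_rewrite 1 [show θ = 2*(θ/2) by ring]
    rw [Real.cos_two_mul]
    nlinarith [Real.sin_sq_add_cos_sq (θ/2)]
  have h3 : Real.sin θ = 2 * Real.sin (θ/2) * Real.cos (θ/2) := by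
    nth_rewrite 1 [show θ = 2*(θ/2) by ring]
    rw [Real.sin_two_mul]
  rw [hζ, Complex.exp_mul_I, ← Complex.ofReal_cos, ← Complex.ofReal_sin]
  apply Complex.ext
  · simp only [Complex.sub_re, Complex.one_re, Complex.add_re, Complex.ofReal_re,
      Complex.mul_re, Complex.I_re, Complex.I_im, Complex.ofReal_im, Complex.add_im,
      Complex.mul_im, Complex.sub_im, Complex.one_im]
    rw [hcos, h2]
    ring
  · simp only [Complex.sub_re, Complex.one_re, Complex.add_re, Complex.ofReal_re,
      Complex.mul_re, Complex.I_re, Complex.I_im, Complex.ofReal_im, Complex.add_im,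
      Complex.mul_im, Complex.sub_im, Complex.one_im]
    rw [hsin, h3]
    ring

lemma log_one_sub_zt (k j : ℕ) (hk : k ≠ 0) (hj : j < k) :
    Complex.log (1 - zt k j) = (Real.log (2 * Real.sin (th k j / 2)) : ℂ)
      + ((th k j - Real.pi) / 2 : ℝ) * Complex.I := by
  have hs := sin_half_pos k j hk hj
  have hr : (0:ℝ) < 2 * Real.sin (th k j / 2) := by linarith
  have h1 : 1 - zt k j = Complex.exp ((Real.log (2 * Real.sin (th k j / 2)) : ℂ)
      + ((th k j - Real.pi) / 2 : ℝ) * Complex.I) := by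
    rw [Complex.exp_add, ← Complex.ofReal_exp, Real.exp_log hr, one_sub_zt_eq]
  rw [h1, Complex.log_exp]
  · simpa using by linarith [th_pos k j hk, Real.pi_pos]
  · simpa using by linarith [th_lt k j hj, Real.pi_pos]

lemma cf_eq (k j : ℕ) (hk : k ≠ 0) (hj : j < k) :
    cf k j = (1 - (Real.cot (th k j / 2) : ℂ) * Complex.I) / (k:ℂ) := by
  have hkc : (k : ℂ) ≠ 0 := Nat.cast_ne_zero.mpr hk
  have hs : Real.sin (th k j / 2) ≠ 0 := ne_of_gt (sin_half_pos k j hk hj)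
  set θ := th k j with hθ
  have hζ : zt k j = (Real.cos θ : ℂ) + (Real.sin θ : ℝ) * Complex.I := by
    rw [zt, Complex.exp_mul_I, ← Complex.ofReal_cos, ← Complex.ofReal_sin]
  have h2 : Real.cos θ = 1 - 2 * Real.sin (θ/2)^2 := by
    nth_rewrite 1 [show θ = 2*(θ/2) by ring]
    rw [Real.cos_two_mul]
    nlinarith [Real.sin_sq_add_cos_sq (θ/2)]
  have h3 : Real.sin θ = 2 * Real.sin (θ/2) * Real.cos (θ/2) := by
    nth_rewrite 1 [show θ = 2*(θ/2) by ring]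
    rw [Real.sin_two_mul]
  rw [cf, div_eq_div_iff (mul_ne_zero hkc (one_sub_zt_ne k j hk)) hkc]
  rw [hζ]
  apply Complex.ext <;>
    simp only [Complex.mul_re, Complex.mul_im, Complex.add_re, Complex.add_im,
      Complex.sub_re, Complex.sub_im, Complex.one_re, Complex.one_im, Complex.I_re,
      Complex.I_im, Complex.ofReal_re, Complex.ofReal_im, Complex.neg_re, Complex.neg_im,
      Complex.natCast_re, Complex.natCast_im, Complex.re_ofNat, Complex.im_ofNat] <;>
    rw [Real.cot_eq_cos_div_sin] <;>
    field_simp <;>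
    rw [h2, h3]
  · linear_combination (2*(k:ℝ)*Real.sin (θ/2)) * Real.sin_sq_add_cos_sq (θ/2)
  · ring

lemma prod_sin (k : ℕ) (hk : k ≠ 0) :
    ∏ j ∈ range k, (2 * Real.sin (th k j / 2)) = 2 := by
  have h := prod_zt k hk 1
  rw [one_pow] at h
  have h2 := congrArg (fun z : ℂ => ‖z‖) h
  rw [norm_prod] at h2
  norm_num at h2
  calc ∏ j ∈ range k, (2 * Real.sin (th k j / 2))
      = ∏ j ∈ range k, ‖1 - zt k j‖ := by
        refine Finset.prod_congr rfl fun j hj => ?_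
        rw [one_sub_zt_eq, norm_mul, Complex.norm_real, Real.norm_eq_abs, Complex.norm_exp_ofReal_mul_I, mul_one,
          abs_of_pos]
        have := sin_half_pos k j hk (mem_range.mp hj)
        linarith
    _ = 2 := h2

lemma sum_log (k : ℕ) (hk : k ≠ 0) :
    ∑ j ∈ range k, Real.log (2 * Real.sin (th k j / 2)) = Real.log 2 := by
  rw [← Real.log_prod fun j hj =>
    ne_of_gt (by linarith [sin_half_pos k j hk (mem_range.mp hj)]), prod_sin k hk]

lemma slit (k j : ℕ) (hk : k ≠ 0) (t : ℝ) (ht : 0 ≤ t) :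
    (t : ℂ) - zt k j ∈ Complex.slitPlane := by
  rw [Complex.mem_slitPlane_iff]
  by_cases him : (zt k j).im = 0
  · left
    have hre : (zt k j) = ((zt k j).re : ℂ) := by
      apply Complex.ext <;> simp [him]
    have hpow := zt_pow k j hk
    rw [hre, ← Complex.ofReal_pow] at hpow
    have h2 : ((zt k j).re : ℝ) ^ k = -1 := by exact_mod_cast hpow
    have hneg : (zt k j).re < 0 := by
      by_contra hc
      push_neg at hc
      nlinarith [pow_nonneg hc k]
    simp only [Complex.sub_re, Complex.ofReal_re]
    linarith
  · right
    simpa using him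

lemma ftc (k : ℕ) (hk : k ≠ 0) :
    Complex.ofReal (∫ t in (0:ℝ)..1, Q k t / (1 + t ^ k))
      = ∑ j ∈ range k, cf k j *
          (Complex.log (1 - zt k j) - Complex.log (0 - zt k j)) := by
  set F : ℝ → ℂ := fun t => ∑ j ∈ range k, cf k j * Complex.log ((t:ℂ) - zt k j) with hF
  set g : ℝ → ℂ := fun t => ∑ j ∈ range k, cf k j / ((t:ℂ) - zt k j) with hg
  have hmem : ∀ t ∈ Set.uIcc (0:ℝ) 1, 0 ≤ t := by
    intro t htm
    rw [Set.uIcc_of_le zero_le_one] at htm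
    exact htm.1
  have hderiv : ∀ t ∈ Set.uIcc (0:ℝ) 1, HasDerivAt F (g t) t := by
    intro t htm
    have ht := hmem t htm
    apply HasDerivAt.fun_sum
    intro j hj
    have h1 : HasDerivAt (fun z : ℂ => Complex.log (z - zt k j))
        (((t:ℂ) - zt k j)⁻¹) (t : ℂ) := by
      have hl := Complex.hasDerivAt_log (slit k j hk t ht)
      simpa [Function.comp_def] using hl.comp (t:ℂ) ((hasDerivAt_id ((t:ℂ))).sub_const (zt k j))
    have h2 := h1.comp_ofReal
    have h3 := h2.const_mul (cf k j)
    simpa [div_eq_mul_inv] using h3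
  have hcont : ContinuousOn g (Set.uIcc (0:ℝ) 1) := by
    apply continuousOn_finset_sum
    intro j hj
    apply ContinuousOn.div continuousOn_const
    · exact (Complex.continuous_ofReal.sub continuous_const).continuousOn
    · intro t htm
      exact sub_zt_ne k j hk t (hmem t htm)
  have hint : IntervalIntegrable g MeasureTheory.volume 0 1 :=
    hcont.intervalIntegrable
  have heq : ∫ t in (0:ℝ)..1, g t = F 1 - F 0 :=
    intervalIntegral.integral_eq_sub_of_hasDerivAt hderiv hint
  have hae : ∫ t in (0:ℝ)..1, g t
      = ∫ t in (0:ℝ)..1, ((Q k t / (1 + t ^ k) : ℝ) : ℂ) := by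
    apply intervalIntegral.integral_congr_ae
    have h1 : ∀ᵐ (x : ℝ), x ≠ 1 := by
      rw [MeasureTheory.ae_iff]
      have : {a : ℝ | ¬ a ≠ 1} = {1} := by ext a; simp
      rw [this]
      exact MeasureTheory.measure_singleton 1
    filter_upwards [h1] with x hx hxm
    rw [Set.uIoc_of_le zero_le_one] at hxm
    exact key_pointwise k hk x (le_of_lt hxm.1) (lt_of_le_of_ne hxm.2 hx)
  rw [intervalIntegral.integral_ofReal] at hae
  rw [← hae, heq, hF]
  simp only [Complex.ofReal_one, Complex.ofReal_zero]
  rw [← Finset.sum_sub_distrib]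
  congr 1
  ext j
  ring

/-- For `k ≥ 2`,
`∫₀¹ Q_k(t)/(1+t^k) dt = (log 2)/k − (π/(2k²))·Σ_{j=0}^{k−1} (2j+1−k)·cot((2j+1)π/(2k))`. -/
theorem stmt_11 (k : ℕ) (hk : 2 ≤ k) :
    ∫ t in (0:ℝ)..1, Q k t / (1 + t ^ k) =
      Real.log 2 / k
        - Real.pi / (2 * (k : ℝ) ^ 2) * ∑ j ∈ Finset.range k,
            (2 * (j : ℝ) + 1 - k) * Real.cot ((2 * (j : ℝ) + 1) * Real.pi / (2 * k)) := by
  have hk0 : k ≠ 0 := by omega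
  have hkR : (k:ℝ) ≠ 0 := Nat.cast_ne_zero.mpr hk0
  have h := ftc k hk0
  have hre := congrArg Complex.re h
  rw [Complex.ofReal_re, Complex.re_sum] at hre
  rw [hre]
  have hterm : ∀ j ∈ Finset.range k,
      (cf k j * (Complex.log (1 - zt k j) - Complex.log (0 - zt k j))).re
      = Real.log (2 * Real.sin (th k j / 2)) / k
        + (-(Real.pi / (2 * (k:ℝ) ^ 2) * ((2 * (j:ℝ) + 1 - k)
            * Real.cot ((2 * (j:ℝ) + 1) * Real.pi / (2 * k))))) := by
    intro j hj
    have hjk := Finset.mem_range.mp hj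
    rw [cf_eq k j hk0 hjk, log_one_sub_zt k j hk0 hjk, log_neg_zt k j hk0 hjk]
    have hw : ((Real.log (2 * Real.sin (th k j / 2)) : ℂ)
          + ((th k j - Real.pi)/2 : ℝ) * Complex.I - ((th k j - Real.pi : ℝ)) * Complex.I)
        = (Real.log (2 * Real.sin (th k j / 2)) : ℂ)
          + (((Real.pi - th k j)/2 : ℝ)) * Complex.I := by
      push_cast
      ring
    rw [hw]
    have hcot : th k j / 2 = (2 * (j:ℝ) + 1) * Real.pi / (2 * (k:ℝ)) := by
      rw [th]; ring
    have hth : th k j = (2 * (j:ℝ) + 1) * Real.pi / k := rfl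
    simp only [div_natCast_re, Complex.mul_re, Complex.sub_re, Complex.one_re,
      Complex.ofReal_re, Complex.I_re, Complex.add_re, Complex.I_im, Complex.ofReal_im,
      Complex.sub_im, Complex.one_im, Complex.add_im, Complex.mul_im, div_natCast_im]
    rw [hcot, hth]
    field_simp
    ring
  rw [Finset.sum_congr rfl hterm, Finset.sum_add_distrib, ← Finset.sum_div, sum_log k hk0]
  rw [Finset.sum_neg_distrib, ← Finset.mul_sum, ← sub_eq_add_neg]
end

section
/- For every integer k ≥ 1, the series Σ_{n=1}^∞ (−1)^{n−1}·H_{kn}/n converges and its sum equals −∫₀¹ (k·y^{k−1}/(1+y^k))·log(1−y) dy. -/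
open Filter Topology intervalIntegral

lemma H_eq (n : ℕ) : H n = (harmonic n : ℝ) := by
  simp [H, harmonic, one_div]

lemma H_nonneg (n : ℕ) : 0 ≤ H n :=
  Finset.sum_nonneg fun j _ => by positivity

lemma H_le (n : ℕ) : H n ≤ 1 + Real.log n := by
  rw [H_eq]; exact_mod_cast harmonic_le_one_add_log n

lemma H_succ (n : ℕ) : H (n + 1) = H n + 1 / ((n : ℝ) + 1) :=
  Finset.sum_range_succ _ n

lemma alt_est {a : ℕ → ℝ} {l : ℝ} (ha : Antitone a)
    (hl : Tendsto (fun n => ∑ i ∈ Finset.range n, (-1 : ℝ) ^ i * a i) atTop (𝓝 l)) (m : ℕ) :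
    |∑ i ∈ Finset.range m, (-1 : ℝ) ^ i * a i - l| ≤ a m := by
  have hstep : ∀ p : ℕ, ∑ i ∈ Finset.range (p + 1), (-1 : ℝ) ^ i * a i
      = ∑ i ∈ Finset.range p, (-1 : ℝ) ^ i * a i + (-1 : ℝ) ^ p * a p :=
    fun p => Finset.sum_range_succ _ p
  rcases Nat.even_or_odd m with ⟨j, hj⟩ | ⟨j, hj⟩
  · have hm : m = 2 * j := by omega
    subst hm
    have h1 := ha.alternating_series_le_tendsto hl j
    have h2 := ha.tendsto_le_alternating_series hl j
    have h3 := hstep (2 * j)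
    have h4 : ((-1 : ℝ)) ^ (2 * j) = 1 := by simp [pow_mul]
    rw [abs_le]; constructor <;> nlinarith
  · have hm : m = 2 * j + 1 := by omega
    subst hm
    have h1 := ha.tendsto_le_alternating_series hl j
    have h2 := ha.alternating_series_le_tendsto hl (j + 1)
    have h3 := hstep (2 * j + 1)
    have h4 : ((-1 : ℝ)) ^ (2 * j + 1) = -1 := by simp [pow_succ, pow_mul]
    have h5 : 2 * (j + 1) = 2 * j + 1 + 1 := by ring
    rw [h5] at h2
    rw [abs_le]; constructor <;> nlinarith

lemma even_partial (m : ℕ) :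
    ∑ i ∈ Finset.range (2 * m), (-1 : ℝ) ^ i * (1 / ((i : ℝ) + 1)) = H (2 * m) - H m := by
  induction m with
  | zero => simp [H]
  | succ m ih =>
    have h2 : 2 * (m + 1) = 2 * m + 1 + 1 := by ring
    rw [h2, Finset.sum_range_succ, Finset.sum_range_succ, ih, H_succ, H_succ, H_succ]
    have h4 : ((-1 : ℝ)) ^ (2 * m) = 1 := by simp [pow_mul]
    have h5 : ((-1 : ℝ)) ^ (2 * m + 1) = -1 := by simp [pow_succ, pow_mul]
    rw [h4, h5]
    push_cast
    have hm1 : ((m : ℝ)) + 1 ≠ 0 := by positivity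
    have hm2 : (2 * (m : ℝ)) + 1 ≠ 0 := by positivity
    have hm3 : (2 * (m : ℝ)) + 1 + 1 ≠ 0 := by positivity
    field_simp
    ring

lemma alt_harmonic :
    Tendsto (fun m => ∑ i ∈ Finset.range m, (-1 : ℝ) ^ i * (1 / ((i : ℝ) + 1))) atTop
      (𝓝 (Real.log 2)) := by
  have ha : Antitone fun i : ℕ => 1 / ((i : ℝ) + 1) := by
    intro i j hij
    apply one_div_le_one_div_of_le (by positivity)
    have : (i : ℝ) ≤ j := by exact_mod_cast hij
    linarith
  have h0 : Tendsto (fun i : ℕ => 1 / ((i : ℝ) + 1)) atTop (𝓝 0) :=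
    tendsto_one_div_add_atTop_nhds_zero_nat
  obtain ⟨l, hl⟩ := ha.tendsto_alternating_series_of_tendsto_zero h0
  have h2 : Tendsto (fun m : ℕ => 2 * m) atTop atTop :=
    tendsto_atTop_mono (fun n => Nat.le_mul_of_pos_left n (by norm_num)) tendsto_id
  have he : Tendsto (fun m : ℕ => H (2 * m) - H m) atTop (𝓝 l) :=
    (hl.comp h2).congr fun m => even_partial m
  have he' : Tendsto (fun m : ℕ => H (2 * m) - H m) atTop (𝓝 (Real.log 2)) := by
    have hγ := Real.tendsto_harmonic_sub_log
    have hγ2 : Tendsto (fun m : ℕ => (harmonic (2 * m) : ℝ) - Real.log (2 * m)) atTop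
        (𝓝 Real.eulerMascheroniConstant) := by
      have := hγ.comp h2
      refine this.congr fun m => ?_
      simp only [Function.comp]
      push_cast
      ring_nf
    have : Tendsto (fun m : ℕ =>
        (((harmonic (2 * m) : ℝ) - Real.log (2 * m)) - ((harmonic m : ℝ) - Real.log m))
          + Real.log 2) atTop (𝓝 (Real.log 2)) := by
      have := (hγ2.sub hγ).add_const (Real.log 2)
      simpa using this
    refine this.congr' ?_
    filter_upwards [eventually_ne_atTop 0] with m hm
    have hm0 : (m : ℝ) ≠ 0 := Nat.cast_ne_zero.mpr hm
    rw [H_eq, H_eq]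
    have : Real.log (2 * (m : ℝ)) = Real.log 2 + Real.log m :=
      Real.log_mul two_ne_zero hm0
    push_cast
    rw [this]
    ring
  have : l = Real.log 2 := tendsto_nhds_unique he he'
  rwa [this] at hl

lemma key_ineq {x : ℝ} (h0 : 0 ≤ x) (h1 : x ≤ 1) (n : ℕ) :
    ((n : ℝ) + 1) * x ^ (n + 1) * (1 - x) ≤ 1 - x ^ (n + 1) := by
  have hs : ∀ i ∈ Finset.range (n + 1), x ^ (n + 1) ≤ x ^ i := fun i hi =>
    pow_le_pow_of_le_one h0 h1 (Finset.mem_range.mp hi).le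
  have hsum : ((n : ℝ) + 1) * x ^ (n + 1) ≤ ∑ i ∈ Finset.range (n + 1), x ^ i := by
    calc ((n : ℝ) + 1) * x ^ (n + 1) = ∑ _i ∈ Finset.range (n + 1), x ^ (n + 1) := by
          simp [Finset.sum_const]
      _ ≤ _ := Finset.sum_le_sum hs
  have hg : (1 - x) * ∑ i ∈ Finset.range (n + 1), x ^ i = 1 - x ^ (n + 1) := by
    have := geom_sum_mul x (n + 1)
    linear_combination -this
  nlinarith [sub_nonneg.mpr h1]

lemma c_antitone {x : ℝ} (h0 : 0 ≤ x) (h1 : x ≤ 1) :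
    Antitone fun n : ℕ => (1 - x ^ (n + 1)) / ((n : ℝ) + 1) := by
  apply antitone_nat_of_succ_le
  intro n
  rw [div_le_div_iff₀ (by positivity) (by positivity)]
  have hk := key_ineq h0 h1 n
  have hp : x ^ (n + 1 + 1) = x ^ (n + 1) * x := pow_succ x (n + 1)
  push_cast
  nlinarith [pow_nonneg h0 (n + 1)]

lemma geom_term {t : ℝ} (ht : t ≠ 1) (N : ℕ) :
    ∑ j ∈ Finset.range N, t ^ j = (1 - t ^ N) * (1 - t)⁻¹ := by
  rw [geom_sum_eq ht]
  have h1 : t - 1 ≠ 0 := sub_ne_zero.mpr ht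
  have h2 : (1 : ℝ) - t ≠ 0 := sub_ne_zero.mpr (Ne.symm ht)
  field_simp
  ring

noncomputable def gg (k : ℕ) (t : ℝ) : ℝ := (Real.log 2 - Real.log (1 + t ^ k)) / (1 - t)
noncomputable def ww (k : ℕ) (y : ℝ) : ℝ := ((k : ℝ) * y ^ (k - 1) / (1 + y ^ k)) * Real.log (1 - y)
noncomputable def Pm (k m : ℕ) (t : ℝ) : ℝ :=
  ∑ n ∈ Finset.range m, (-1 : ℝ) ^ n / ((n : ℝ) + 1) * ∑ j ∈ Finset.range (k * (n + 1)), t ^ j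
noncomputable def qq (k m : ℕ) (t : ℝ) : ℝ :=
  (∑ j ∈ Finset.range (k * (m + 1)), t ^ j) / ((m : ℝ) + 1)

lemma continuous_Pm (k m : ℕ) : Continuous (Pm k m) := by
  apply continuous_finset_sum
  intro n _
  exact continuous_const.mul (continuous_finset_sum _ fun j _ => continuous_pow j)

lemma continuous_qq (k m : ℕ) : Continuous (qq k m) :=
  (continuous_finset_sum _ fun j _ => continuous_pow j).div_const _

lemma pointwise_bound {k : ℕ} (hk : 1 ≤ k) {t : ℝ} (ht0 : 0 < t) (ht1 : t < 1) (m : ℕ) :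
    |Pm k m t - gg k t| ≤ qq k m t := by
  have htne : t ≠ 1 := ne_of_lt ht1
  set a : ℕ → ℝ := fun n => (1 - (t ^ k) ^ (n + 1)) / ((n : ℝ) + 1) * (1 - t)⁻¹ with ha_def
  have hinv : (0 : ℝ) ≤ (1 - t)⁻¹ := inv_nonneg.mpr (by linarith)
  have hx0 : (0 : ℝ) ≤ t ^ k := pow_nonneg ht0.le k
  have hx1 : t ^ k ≤ 1 := pow_le_one₀ ht0.le ht1.le
  -- partial sums equal Pm
  have hterm : ∀ n : ℕ, (-1 : ℝ) ^ n * a n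
      = (-1 : ℝ) ^ n / ((n : ℝ) + 1) * ∑ j ∈ Finset.range (k * (n + 1)), t ^ j := by
    intro n
    simp only [ha_def, geom_term htne, pow_mul]
    ring
  have hsum_eq : ∀ p : ℕ, ∑ i ∈ Finset.range p, (-1 : ℝ) ^ i * a i = Pm k p t :=
    fun p => Finset.sum_congr rfl fun n _ => hterm n
  -- antitone
  have ha : Antitone a := fun i j hij =>
    mul_le_mul_of_nonneg_right (c_antitone hx0 hx1 hij) hinv
  -- limit
  have habs : |(-(t ^ k))| < 1 := by
    rw [abs_neg, abs_of_nonneg hx0]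
    exact pow_lt_one₀ ht0.le ht1 (by omega)
  have hs := Real.hasSum_pow_div_log_of_abs_lt_one habs
  have hs2 : HasSum (fun n : ℕ => (-1 : ℝ) ^ n * (t ^ k) ^ (n + 1) / ((n : ℝ) + 1))
      (Real.log (1 + t ^ k)) := by
    have h2 := hs.neg
    rw [neg_neg, sub_neg_eq_add] at h2
    refine h2.congr_fun fun n => ?_
    rw [neg_pow]
    push_cast
    ring
  have hB := hs2.tendsto_sum_nat
  have hps : ∀ p : ℕ, ∑ i ∈ Finset.range p, (-1 : ℝ) ^ i * a i
      = (∑ i ∈ Finset.range p, (-1 : ℝ) ^ i * (1 / ((i : ℝ) + 1))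
        - ∑ i ∈ Finset.range p, (-1 : ℝ) ^ i * (t ^ k) ^ (i + 1) / ((i : ℝ) + 1))
          * (1 - t)⁻¹ := by
    intro p
    rw [← Finset.sum_sub_distrib, Finset.sum_mul]
    refine Finset.sum_congr rfl fun i _ => ?_
    simp only [ha_def]
    ring
  have hlim : Tendsto (fun p => ∑ i ∈ Finset.range p, (-1 : ℝ) ^ i * a i) atTop
      (𝓝 (gg k t)) := by
    have h3 := (alt_harmonic.sub hB).mul_const (1 - t)⁻¹
    refine (h3.congr fun p => (hps p).symm).congr' ?_ |>.mono_right ?_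
    · exact Eventually.of_forall fun p => rfl
    · have : (Real.log 2 - Real.log (1 + t ^ k)) * (1 - t)⁻¹ = gg k t := by
        rw [gg, div_eq_mul_inv]
      rw [this]
  have hest := alt_est ha hlim m
  rw [hsum_eq m] at hest
  have haq : a m = qq k m t := by
    simp only [ha_def, qq, geom_term htne, pow_mul]
    ring
  rwa [haq] at hest

lemma integral_pow_block (N : ℕ) :
    ∫ t in (0 : ℝ)..1, ∑ j ∈ Finset.range N, t ^ j = H N := by
  rw [intervalIntegral.integral_finset_sum (fun j _ => (continuous_pow j).intervalIntegrable 0 1)]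
  refine Finset.sum_congr rfl fun j _ => ?_
  rw [integral_pow]
  simp

lemma integral_Pm (k m : ℕ) :
    ∫ t in (0 : ℝ)..1, Pm k m t
      = ∑ n ∈ Finset.range m, (-1 : ℝ) ^ n * H (k * (n + 1)) / ((n : ℝ) + 1) := by
  rw [show (fun t => Pm k m t) = Pm k m from rfl]
  unfold Pm
  rw [intervalIntegral.integral_finset_sum]
  · refine Finset.sum_congr rfl fun n _ => ?_
    rw [intervalIntegral.integral_const_mul, integral_pow_block]
    ring
  · intro n _
    exact (continuous_const.mul
      (continuous_finset_sum _ fun j _ => continuous_pow j)).intervalIntegrable 0 1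

lemma integral_qq (k m : ℕ) :
    ∫ t in (0 : ℝ)..1, qq k m t = H (k * (m + 1)) / ((m : ℝ) + 1) := by
  unfold qq
  rw [intervalIntegral.integral_div, integral_pow_block]

lemma log_upper {k : ℕ} (hk : 1 ≤ k) {t : ℝ} (ht0 : 0 ≤ t) (ht1 : t ≤ 1) :
    Real.log 2 - Real.log (1 + t ^ k) ≤ (k : ℝ) * (1 - t) := by
  have hx0 : (0 : ℝ) ≤ t ^ k := pow_nonneg ht0 k
  have hpos : (0 : ℝ) < 1 + t ^ k := by linarith
  have h1 : Real.log 2 - Real.log (1 + t ^ k) = Real.log (2 / (1 + t ^ k)) :=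
    (Real.log_div two_ne_zero hpos.ne').symm
  have h2 : Real.log (2 / (1 + t ^ k)) ≤ 2 / (1 + t ^ k) - 1 :=
    Real.log_le_sub_one_of_pos (by positivity)
  have h3 : 2 / (1 + t ^ k) - 1 ≤ 1 - t ^ k := by
    have hx1 : t ^ k ≤ 1 := pow_le_one₀ ht0 ht1
    rw [div_sub_one hpos.ne', div_le_iff₀ hpos]
    nlinarith [hx0, hx1]
  have h4 : 1 - t ^ k ≤ (k : ℝ) * (1 - t) := by
    have hg : (1 - t) * ∑ i ∈ Finset.range k, t ^ i = 1 - t ^ k := by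
      have := geom_sum_mul t k
      linear_combination -this
    have hsb : ∑ i ∈ Finset.range k, t ^ i ≤ (k : ℝ) := by
      calc ∑ i ∈ Finset.range k, t ^ i ≤ ∑ _i ∈ Finset.range k, (1 : ℝ) :=
            Finset.sum_le_sum fun i _ => pow_le_one₀ ht0 ht1
        _ = k := by simp
    nlinarith [sub_nonneg.mpr ht1]
  linarith

lemma log_lower {k : ℕ} {t : ℝ} (ht0 : 0 ≤ t) (ht1 : t ≤ 1) :
    0 ≤ Real.log 2 - Real.log (1 + t ^ k) := by
  have hx1 : t ^ k ≤ 1 := pow_le_one₀ ht0 ht1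
  have : Real.log (1 + t ^ k) ≤ Real.log 2 :=
    Real.log_le_log (by positivity) (by linarith)
  linarith

lemma gg_integrable {k : ℕ} (hk : 1 ≤ k) : IntervalIntegrable (gg k) MeasureTheory.volume 0 1 := by
  rw [intervalIntegrable_iff, Set.uIoc_of_le zero_le_one]
  apply MeasureTheory.Measure.integrableOn_of_bounded (M := (k : ℝ))
  · exact (measure_Ioc_lt_top).ne
  · apply Measurable.aestronglyMeasurable
    apply Measurable.div
    · exact measurable_const.sub
        ((Real.measurable_log).comp (measurable_const.add (measurable_id.pow_const k)))
    · exact measurable_const.sub measurable_id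
  · have hne : ∀ᵐ t : ℝ ∂(MeasureTheory.volume.restrict (Set.Ioc (0:ℝ) 1)), t ≠ 1 := by
      refine (MeasureTheory.ae_restrict_iff' measurableSet_Ioc).mpr ?_
      have h0 : MeasureTheory.volume ({(1 : ℝ)}) = 0 := Real.volume_singleton
      rw [MeasureTheory.ae_iff]
      refine MeasureTheory.measure_mono_null (fun x hx => ?_) h0
      simp only [Set.mem_setOf_eq, not_forall] at hx
      obtain ⟨_, h2⟩ := hx
      simpa using h2
    filter_upwards [hne, MeasureTheory.ae_restrict_mem measurableSet_Ioc] with t ht1 ht2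
    have ht0 : 0 < t := ht2.1
    have htlt : t < 1 := lt_of_le_of_ne ht2.2 ht1
    have hpos : (0 : ℝ) < 1 - t := by linarith
    have hub := log_upper hk ht0.le htlt.le
    have hlb := log_lower (k := k) ht0.le htlt.le
    rw [Real.norm_eq_abs, gg, abs_div, abs_of_nonneg hlb, abs_of_pos hpos,
      div_le_iff₀ hpos]
    linarith [mul_le_mul_of_nonneg_left hpos.le (Nat.cast_nonneg (α := ℝ) k)]

lemma log_one_sub_integrable :
    IntervalIntegrable (fun t => Real.log (1 - t)) MeasureTheory.volume 0 1 := by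
  have h : IntervalIntegrable (fun t => -Real.log (1 - t)) MeasureTheory.volume 0 1 := by
    apply intervalIntegral.intervalIntegrable_deriv_of_nonneg
      (g := fun t => (1 - t) * Real.log (1 - t) + t)
    · exact ((Real.continuous_mul_log.comp
        (continuous_const.sub continuous_id)).add continuous_id).continuousOn
    · intro x hx
      simp only [min_def, max_def] at hx
      norm_num at hx
      have hne : (1 : ℝ) - x ≠ 0 := by cases hx with | intro h1 h2 => linarith
      have h1 : HasDerivAt (fun t : ℝ => 1 - t) (-1) x := by
        simpa using (hasDerivAt_id x).const_sub 1
      have h2 : HasDerivAt (fun y : ℝ => y * Real.log y)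
          (Real.log (1 - x) + 1) (1 - x) := Real.hasDerivAt_mul_log hne
      have h3 := (h2.comp x h1).add (hasDerivAt_id x)
      have h4 : (Real.log (1 - x) + 1) * -1 + 1 = -Real.log (1 - x) := by ring
      rw [h4] at h3
      exact h3
    · intro x hx
      simp only [min_def, max_def] at hx
      norm_num at hx
      have := Real.log_nonpos (by linarith [hx.1] : (0:ℝ) ≤ 1 - x) (by linarith [hx.1])
      linarith
  have heq : (fun t => Real.log (1 - t)) = -(fun t : ℝ => -Real.log (1 - t)) := by
    funext t; simp
  rw [heq]
  exact h.neg

lemma ww_integrable {k : ℕ} (hk : 1 ≤ k) : IntervalIntegrable (ww k) MeasureTheory.volume 0 1 := by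
  have hc : ContinuousOn (fun y : ℝ => (k : ℝ) * y ^ (k - 1) / (1 + y ^ k)) (Set.uIcc 0 1) := by
    apply ContinuousOn.div
    · exact (continuous_const.mul (continuous_pow (k - 1))).continuousOn
    · exact (continuous_const.add (continuous_pow k)).continuousOn
    · intro x hx
      rw [Set.uIcc_of_le zero_le_one] at hx
      have : (0 : ℝ) ≤ x ^ k := pow_nonneg hx.1 k
      positivity
  exact log_one_sub_integrable.continuousOn_mul hc

lemma uv_zero {k : ℕ} (hk : 1 ≤ k) :
    (Real.log 2 - Real.log (1 + (0:ℝ) ^ k)) * (-Real.log (1 - 0)) = 0 := by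
  simp

lemma ibp_ab {k : ℕ} (hk : 1 ≤ k) {b : ℝ} (hb0 : 0 ≤ b) (hb1 : b < 1) :
    ∫ t in (0 : ℝ)..b, gg k t
      = (Real.log 2 - Real.log (1 + b ^ k)) * (-Real.log (1 - b))
        - ∫ y in (0 : ℝ)..b, ww k y := by
  have huIcc : Set.uIcc (0 : ℝ) b = Set.Icc 0 b := Set.uIcc_of_le hb0
  have hmem : ∀ x ∈ Set.uIcc (0 : ℝ) b, 0 ≤ x ∧ x < 1 := by
    intro x hx
    rw [huIcc] at hx
    exact ⟨hx.1, lt_of_le_of_lt hx.2 hb1⟩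
  have hu : ∀ x ∈ Set.uIcc (0 : ℝ) b,
      HasDerivAt (fun t => Real.log 2 - Real.log (1 + t ^ k))
        (-((k : ℝ) * x ^ (k - 1) / (1 + x ^ k))) x := by
    intro x hx
    obtain ⟨hx0, hx1⟩ := hmem x hx
    have hpos : (0 : ℝ) < 1 + x ^ k := by positivity
    have h1 : HasDerivAt (fun t : ℝ => 1 + t ^ k) ((k : ℝ) * x ^ (k - 1)) x := by
      simpa using (hasDerivAt_pow k x).const_add 1
    have h2 := (h1.log hpos.ne').const_sub (Real.log 2)
    exact h2
  have hv : ∀ x ∈ Set.uIcc (0 : ℝ) b,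
      HasDerivAt (fun t => -Real.log (1 - t)) ((1 - x)⁻¹) x := by
    intro x hx
    obtain ⟨hx0, hx1⟩ := hmem x hx
    have hne : (1 : ℝ) - x ≠ 0 := by linarith
    have h1 : HasDerivAt (fun t : ℝ => 1 - t) (-1) x := by
      simpa using (hasDerivAt_id x).const_sub 1
    have h2 := (h1.log hne).neg
    have h5 : (1 - x)⁻¹ = -(-1 / (1 - x)) := by ring
    rw [h5]
    exact h2
  have hu' : IntervalIntegrable (fun x => -((k : ℝ) * x ^ (k - 1) / (1 + x ^ k)))
      MeasureTheory.volume 0 b := by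
    apply ContinuousOn.intervalIntegrable
    apply ContinuousOn.neg
    apply ContinuousOn.div
    · exact (continuous_const.mul (continuous_pow (k - 1))).continuousOn
    · exact (continuous_const.add (continuous_pow k)).continuousOn
    · intro x hx
      obtain ⟨hx0, _⟩ := hmem x hx
      have : (0 : ℝ) ≤ x ^ k := pow_nonneg hx0 k
      positivity
  have hv' : IntervalIntegrable (fun x : ℝ => (1 - x)⁻¹) MeasureTheory.volume 0 b := by
    apply ContinuousOn.intervalIntegrable
    apply ContinuousOn.inv₀ (continuous_const.sub continuous_id).continuousOn
    intro x hx
    obtain ⟨_, hx1⟩ := hmem x hx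
    have hne : (1 : ℝ) - x ≠ 0 := sub_ne_zero.mpr (by linarith)
    simpa using hne
  have hibp := intervalIntegral.integral_mul_deriv_eq_deriv_mul hu hv hu' hv'
  have hL : ∫ t in (0 : ℝ)..b, gg k t
      = ∫ x in (0 : ℝ)..b, (Real.log 2 - Real.log (1 + x ^ k)) * (1 - x)⁻¹ := by
    refine intervalIntegral.integral_congr fun x _ => ?_
    rw [gg, div_eq_mul_inv]
  have hR : ∫ y in (0 : ℝ)..b, ww k y
      = ∫ x in (0 : ℝ)..b,
          -((k : ℝ) * x ^ (k - 1) / (1 + x ^ k)) * -Real.log (1 - x) := by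
    refine intervalIntegral.integral_congr fun x _ => ?_
    rw [ww]
    ring
  rw [hL, hR, hibp, uv_zero hk]
  ring

lemma integral_gg_eq {k : ℕ} (hk : 1 ≤ k) :
    ∫ t in (0 : ℝ)..1, gg k t = -∫ y in (0 : ℝ)..1, ww k y := by
  set L := 𝓝[Set.Ioo (0 : ℝ) 1] (1 : ℝ) with hLdef
  have hNB : L.NeBot := by
    apply mem_closure_iff_nhdsWithin_neBot.mp
    rw [closure_Ioo (by norm_num : (0 : ℝ) ≠ 1)]
    exact ⟨zero_le_one, le_refl 1⟩
  have hIcc : Set.Ioo (0 : ℝ) 1 ⊆ Set.uIcc (0 : ℝ) 1 := by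
    rw [Set.uIcc_of_le zero_le_one]; exact Set.Ioo_subset_Icc_self
  have hg_cont := intervalIntegral.continuousOn_primitive_interval'
    (gg_integrable hk) (Set.left_mem_uIcc (a := (0:ℝ)) (b := 1))
  have hw_cont := intervalIntegral.continuousOn_primitive_interval'
    (ww_integrable hk) (Set.left_mem_uIcc (a := (0:ℝ)) (b := 1))
  have h1mem : (1 : ℝ) ∈ Set.uIcc (0 : ℝ) 1 := Set.right_mem_uIcc
  have hgt : Tendsto (fun b => ∫ t in (0 : ℝ)..b, gg k t) L
      (𝓝 (∫ t in (0 : ℝ)..1, gg k t)) :=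
    (hg_cont 1 h1mem).mono_left (nhdsWithin_mono 1 hIcc)
  have hwt : Tendsto (fun b => ∫ y in (0 : ℝ)..b, ww k y) L
      (𝓝 (∫ y in (0 : ℝ)..1, ww k y)) :=
    (hw_cont 1 h1mem).mono_left (nhdsWithin_mono 1 hIcc)
  have hbd : Tendsto (fun b : ℝ => (Real.log 2 - Real.log (1 + b ^ k)) * (-Real.log (1 - b)))
      L (𝓝 0) := by
    have hcont : Continuous fun b : ℝ => -((k : ℝ) * ((1 - b) * Real.log (1 - b))) :=
      (continuous_const.mul
        (Real.continuous_mul_log.comp (continuous_const.sub continuous_id))).neg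
    have hval : -((k : ℝ) * (((1 : ℝ) - 1) * Real.log (1 - 1))) = 0 := by norm_num
    have hupper : Tendsto (fun b : ℝ => -((k : ℝ) * ((1 - b) * Real.log (1 - b)))) L (𝓝 0) := by
      have h := hcont.tendsto 1
      rw [hval] at h
      exact h.mono_left nhdsWithin_le_nhds
    apply squeeze_zero' ?_ ?_ hupper
    · filter_upwards [self_mem_nhdsWithin] with b hb
      exact mul_nonneg (log_lower hb.1.le hb.2.le)
        (neg_nonneg.mpr (Real.log_nonpos (by linarith [hb.1, hb.2]) (by linarith [hb.1, hb.2])))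
    · filter_upwards [self_mem_nhdsWithin] with b hb
      have h1 := log_upper hk hb.1.le hb.2.le
      have h2 : 0 ≤ -Real.log (1 - b) :=
        neg_nonneg.mpr (Real.log_nonpos (by linarith [hb.1, hb.2]) (by linarith [hb.1, hb.2]))
      have h3 := mul_le_mul_of_nonneg_right h1 h2
      have h4 : (k : ℝ) * (1 - b) * (-Real.log (1 - b))
          = -((k : ℝ) * ((1 - b) * Real.log (1 - b))) := by ring
      linarith
  have heq : (fun b => ∫ t in (0 : ℝ)..b, gg k t)
      =ᶠ[L] fun b => (Real.log 2 - Real.log (1 + b ^ k)) * (-Real.log (1 - b))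
        - ∫ y in (0 : ℝ)..b, ww k y := by
    filter_upwards [self_mem_nhdsWithin] with b hb
    exact ibp_ab hk hb.1.le hb.2
  have hgt2 : Tendsto (fun b => ∫ t in (0 : ℝ)..b, gg k t) L
      (𝓝 (0 - ∫ y in (0 : ℝ)..1, ww k y)) := (hbd.sub hwt).congr' heq.symm
  have := tendsto_nhds_unique hgt hgt2
  rw [this]; ring

lemma ae_ne_one :
    ∀ᵐ t : ℝ ∂(MeasureTheory.volume.restrict (Set.Ioc (0 : ℝ) 1)), t ≠ 1 := by
  refine (MeasureTheory.ae_restrict_iff' measurableSet_Ioc).mpr ?_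
  have h0 : MeasureTheory.volume ({(1 : ℝ)}) = 0 := Real.volume_singleton
  rw [MeasureTheory.ae_iff]
  refine MeasureTheory.measure_mono_null (fun x hx => ?_) h0
  simp only [Set.mem_setOf_eq, not_forall] at hx
  obtain ⟨_, h2⟩ := hx
  simpa using h2

lemma bound_tendsto (k : ℕ) (hk : 1 ≤ k) :
    Tendsto (fun m : ℕ => H (k * (m + 1)) / ((m : ℝ) + 1)) atTop (𝓝 0) := by
  have hub : ∀ m : ℕ, H (k * (m + 1)) / ((m : ℝ) + 1)
      ≤ (1 + Real.log k + Real.log ((m : ℝ) + 1)) / ((m : ℝ) + 1) := by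
    intro m
    have hH := H_le (k * (m + 1))
    have hcast : ((k * (m + 1) : ℕ) : ℝ) = (k : ℝ) * ((m : ℝ) + 1) := by push_cast; ring
    rw [hcast, Real.log_mul (by positivity) (by positivity)] at hH
    · apply div_le_div_of_nonneg_right ?_ (by positivity)
      linarith
  have hlim : Tendsto (fun m : ℕ => (1 + Real.log k + Real.log ((m : ℝ) + 1)) / ((m : ℝ) + 1))
      atTop (𝓝 0) := by
    have h1 : Tendsto (fun m : ℕ => (1 + Real.log k) * (1 / ((m : ℝ) + 1))) atTop (𝓝 0) := by
      simpa using tendsto_one_div_add_atTop_nhds_zero_nat.const_mul (1 + Real.log k)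
    have hcomp : Tendsto (fun m : ℕ => (m : ℝ) + 1) atTop atTop :=
      tendsto_atTop_add_const_right _ 1 tendsto_natCast_atTop_atTop
    have h2 : Tendsto (fun m : ℕ => Real.log ((m : ℝ) + 1) / ((m : ℝ) + 1)) atTop (𝓝 0) := by
      have h3 := (Real.tendsto_pow_log_div_mul_add_atTop 1 0 1 one_ne_zero).comp hcomp
      refine h3.congr fun m => ?_
      simp [Function.comp]
    have h4 := h1.add h2
    rw [add_zero] at h4
    refine h4.congr fun m => ?_
    ring
  apply squeeze_zero (fun m => div_nonneg (H_nonneg _) (by positivity)) hub hlim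

/-- For `k ≥ 1`, the series `Σ_{n=1}^∞ (−1)^{n−1} H_{kn}/n` converges, with sum
`−∫₀¹ (k·y^{k−1}/(1+y^k))·log(1−y) dy`. -/
theorem stmt_13 (k : ℕ) (hk : 1 ≤ k) :
    Tendsto (fun m => ∑ n ∈ Finset.range m,
        (-1 : ℝ) ^ n * H (k * (n + 1)) / (n + 1))
      atTop
      (𝓝 (-∫ y in (0:ℝ)..1, (k * y ^ (k - 1) / (1 + y ^ k)) * Real.log (1 - y))) := by
  have hgoal : (-∫ y in (0:ℝ)..1, ((k : ℝ) * y ^ (k - 1) / (1 + y ^ k)) * Real.log (1 - y))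
      = ∫ t in (0:ℝ)..1, gg k t := by
    rw [integral_gg_eq hk]
    rfl
  rw [hgoal]
  set I := ∫ t in (0:ℝ)..1, gg k t with hI
  have hdiff : Tendsto (fun m => (∑ n ∈ Finset.range m,
      (-1 : ℝ) ^ n * H (k * (n + 1)) / ((n : ℝ) + 1)) - I) atTop (𝓝 0) := by
    apply squeeze_zero_norm ?_ (bound_tendsto k hk)
    intro m
    rw [← integral_Pm k m, hI]
    rw [← intervalIntegral.integral_sub ((continuous_Pm k m).intervalIntegrable 0 1)
      (gg_integrable hk)]
    have hae : ∀ᵐ t ∂(MeasureTheory.volume.restrict (Set.uIoc (0:ℝ) 1)),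
        ‖Pm k m t - gg k t‖ ≤ qq k m t := by
      rw [Set.uIoc_of_le (zero_le_one (α := ℝ))]
      filter_upwards [ae_ne_one, MeasureTheory.ae_restrict_mem measurableSet_Ioc] with t h1 h2
      have ht1 : t < 1 := lt_of_le_of_ne h2.2 h1
      rw [Real.norm_eq_abs]
      exact pointwise_bound hk h2.1 ht1 m
    have hle := intervalIntegral.norm_integral_le_of_norm_le zero_le_one
      ((MeasureTheory.ae_restrict_iff' measurableSet_Ioc).mp
        (by rwa [Set.uIoc_of_le (zero_le_one (α := ℝ))] at hae))
      ((continuous_qq k m).intervalIntegrable 0 1)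
    rw [integral_qq k m] at hle
    calc ‖∫ t in (0:ℝ)..1, (Pm k m t - gg k t)‖
        ≤ |H (k * (m + 1)) / ((m : ℝ) + 1)| := hle.trans (le_abs_self _)
      _ = H (k * (m + 1)) / ((m : ℝ) + 1) :=
          abs_of_nonneg (div_nonneg (H_nonneg _) (by positivity))
  have := hdiff.add_const I
  simpa using this
end

section
/- One has ∫₀¹ t·log(1−t)/(1+t²) dt = −5π²/96 + (1/8)·log² 2. -/
open intervalIntegral

open MeasureTheory Real Set Filter intervalIntegral

lemma ae_ne_one_s15 : ∀ᵐ x : ℝ, x ≠ 1 := by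
  rw [ae_iff]
  simp

lemma intlog : IntervalIntegrable Real.log volume 0 1 := by
  apply IntervalIntegrable.mono_fun'
    (g := fun x : ℝ => 2 * x ^ (-(1/2) : ℝ))
    ((intervalIntegrable_rpow' (by norm_num)).const_mul 2)
    Real.measurable_log.aestronglyMeasurable
  rw [Filter.EventuallyLE, ae_restrict_iff' measurableSet_uIoc]
  filter_upwards with x hx
  rw [Set.uIoc_of_le (by norm_num : (0:ℝ) ≤ 1)] at hx
  obtain ⟨hx0, hx1⟩ := hx
  have hlog : Real.log x ≤ 0 := Real.log_nonpos hx0.le hx1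
  have hrp : (0:ℝ) < x ^ (-(1/2) : ℝ) := Real.rpow_pos_of_pos hx0 _
  rw [Real.norm_eq_abs, abs_of_nonpos hlog]
  have h1 : Real.log (x ^ (-(1/2) : ℝ)) = -(1/2) * Real.log x := Real.log_rpow hx0 _
  have h2 : Real.log (x ^ (-(1/2) : ℝ)) ≤ x ^ (-(1/2) : ℝ) - 1 :=
    Real.log_le_sub_one_of_pos hrp
  nlinarith

lemma intlog1 : IntervalIntegrable (fun x : ℝ => Real.log (1 - x)) volume 0 1 := by
  simpa using (intlog.comp_sub_left 1).symm

lemma meas_log1 : Measurable (fun x : ℝ => Real.log (1 - x)) :=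
  Real.measurable_log.comp (measurable_const.sub measurable_id)

lemma int_main : IntervalIntegrable (fun v : ℝ => v * Real.log (1 - v) / (1 + v ^ 2)) volume 0 1 := by
  apply IntervalIntegrable.mono_fun' (g := fun x : ℝ => |Real.log (1 - x)|) intlog1.abs
  · exact ((measurable_id.mul meas_log1).div
      (measurable_const.add (measurable_id.pow_const 2))).aestronglyMeasurable
  · rw [Filter.EventuallyLE, ae_restrict_iff' measurableSet_uIoc]
    filter_upwards with x hx
    rw [Set.uIoc_of_le (by norm_num : (0:ℝ) ≤ 1)] at hx
    obtain ⟨hx0, hx1⟩ := hx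
    have h2 : (1:ℝ) ≤ 1 + x ^ 2 := by nlinarith
    rw [Real.norm_eq_abs, abs_div, abs_mul, abs_of_pos hx0, abs_of_pos (by linarith : (0:ℝ) < 1 + x ^ 2)]
    rw [div_le_iff₀ (by linarith)]
    nlinarith [abs_nonneg (Real.log (1 - x))]

lemma logdiv_bound {v : ℝ} (h0 : 0 < v) (h1 : v < 1) :
    -Real.log (1 - v) / v ≤ 2 + 2 * |Real.log (1 - v)| := by
  have hv : (0:ℝ) < 1 - v := by linarith
  have hlognn : 0 ≤ -Real.log (1 - v) := by
    simpa using Real.log_nonpos hv.le (by linarith)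
  rcases le_or_gt v (1/2) with hc | hc
  · -- −log(1−v) ≤ v/(1−v) ≤ 2v
    have h2 : Real.log ((1 - v)⁻¹) ≤ (1 - v)⁻¹ - 1 :=
      Real.log_le_sub_one_of_pos (by positivity)
    rw [Real.log_inv] at h2
    have h3 : (1 - v)⁻¹ - 1 = v / (1 - v) := by field_simp; ring
    have h4 : v / (1 - v) ≤ 2 * v := by
      rw [div_le_iff₀ hv]; nlinarith
    have h5 : -Real.log (1 - v) / v ≤ 2 := by
      rw [div_le_iff₀ h0]; nlinarith
    have := abs_nonneg (Real.log (1 - v))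
    linarith
  · have h5 : -Real.log (1 - v) / v ≤ 2 * -Real.log (1 - v) := by
      rw [div_le_iff₀ h0]; nlinarith
    have h6 : -Real.log (1 - v) ≤ |Real.log (1 - v)| := by
      rw [abs_eq_neg_self.mpr (Real.log_nonpos hv.le (by linarith))]
    linarith

lemma int_logdiv : IntervalIntegrable (fun v : ℝ => Real.log (1 - v) / v) volume 0 1 := by
  apply IntervalIntegrable.mono_fun' (g := fun x : ℝ => 2 + 2 * |Real.log (1 - x)|)
    (intervalIntegrable_const.add (intlog1.abs.const_mul 2))
  · exact (meas_log1.div measurable_id).aestronglyMeasurable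
  · rw [Filter.EventuallyLE, ae_restrict_iff' measurableSet_uIoc]
    filter_upwards [ae_ne_one_s15] with x hne hx
    rw [Set.uIoc_of_le (by norm_num : (0:ℝ) ≤ 1)] at hx
    obtain ⟨hx0, hx1⟩ := hx
    have hx1' : x < 1 := lt_of_le_of_ne hx1 hne
    have hv : (0:ℝ) < 1 - x := by linarith
    have hlognp : Real.log (1 - x) ≤ 0 := Real.log_nonpos hv.le (by linarith)
    rw [Real.norm_eq_abs, abs_div, abs_of_pos hx0]
    conv_lhs => rw [abs_of_nonpos hlognp]
    exact logdiv_bound hx0 hx1'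

lemma hasSum_logdiv {v : ℝ} (h0 : 0 < v) (h1 : v < 1) :
    HasSum (fun n : ℕ => v ^ n / (n + 1)) (-Real.log (1 - v) / v) := by
  have h : HasSum (fun i : ℕ => v ^ (i + 1) / ((i : ℝ) + 1) / v) (-Real.log (1 - v) / v) :=
    (Real.hasSum_pow_div_log_of_abs_lt_one
    (by rw [abs_of_pos h0]; exact h1)).div_const v
  convert h using 2 with n
  rw [pow_succ]
  field_simp

lemma tsum_logdiv {v : ℝ} (h0 : 0 < v) (h1 : v < 1) :
    ∑' n : ℕ, v ^ n / ((n : ℝ) + 1) = -Real.log (1 - v) / v :=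
  (hasSum_logdiv h0 h1).tsum_eq

lemma atomA : ∫ v in (0:ℝ)..1, Real.log (1 - v) / v = -(π ^ 2 / 6) := by
  have key : HasSum (fun n : ℕ => ∫ v in (0:ℝ)..1, -(v ^ n / ((n : ℝ) + 1)))
      (∫ v in (0:ℝ)..1, Real.log (1 - v) / v) := by
    apply intervalIntegral.hasSum_integral_of_dominated_convergence
      (bound := fun (n : ℕ) (v : ℝ) => v ^ n / ((n : ℝ) + 1))
    · intro n
      exact (((measurable_id.pow_const n).div_const _).neg).aestronglyMeasurable
    · intro n
      filter_upwards with v hv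
      rw [Set.uIoc_of_le (by norm_num : (0:ℝ) ≤ 1)] at hv
      have : (0:ℝ) < (n : ℝ) + 1 := by positivity
      rw [norm_neg, Real.norm_eq_abs, abs_div, abs_of_pos this, abs_pow,
        abs_of_pos hv.1]
    · filter_upwards [ae_ne_one_s15] with v hne hv
      rw [Set.uIoc_of_le (by norm_num : (0:ℝ) ≤ 1)] at hv
      exact (hasSum_logdiv hv.1 (lt_of_le_of_ne hv.2 hne)).summable
    · apply IntervalIntegrable.mono_fun' (g := fun x : ℝ => 2 + 2 * |Real.log (1 - x)|)
        (intervalIntegrable_const.add (intlog1.abs.const_mul 2))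
      · apply AEStronglyMeasurable.congr
          (((meas_log1.neg.div measurable_id')).aestronglyMeasurable)
        rw [Filter.EventuallyEq, ae_restrict_iff' measurableSet_uIoc]
        filter_upwards [ae_ne_one_s15] with x hne hx
        rw [Set.uIoc_of_le (by norm_num : (0:ℝ) ≤ 1)] at hx
        show -Real.log (1 - x) / x = _
        rw [← tsum_logdiv hx.1 (lt_of_le_of_ne hx.2 hne)]
      · rw [Filter.EventuallyLE, ae_restrict_iff' measurableSet_uIoc]
        filter_upwards [ae_ne_one_s15] with x hne hx
        rw [Set.uIoc_of_le (by norm_num : (0:ℝ) ≤ 1)] at hx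
        have hx1 : x < 1 := lt_of_le_of_ne hx.2 hne
        have hnn : 0 ≤ -Real.log (1 - x) / x :=
          div_nonneg (by simpa using Real.log_nonpos (by linarith [hx.2]) (by linarith [hx.1])) hx.1.le
        rw [Real.norm_eq_abs, tsum_logdiv hx.1 hx1, abs_of_nonneg hnn]
        exact logdiv_bound hx.1 hx1
    · filter_upwards [ae_ne_one_s15] with v hne hv
      rw [Set.uIoc_of_le (by norm_num : (0:ℝ) ≤ 1)] at hv
      have h := (hasSum_logdiv hv.1 (lt_of_le_of_ne hv.2 hne)).neg
      simpa [neg_div] using h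
  have hc : ∀ n : ℕ, (∫ v in (0:ℝ)..1, -(v ^ n / ((n : ℝ) + 1))) = -(1 / ((n : ℝ) + 1) ^ 2) := by
    intro n
    rw [intervalIntegral.integral_neg, intervalIntegral.integral_div, integral_pow]
    field_simp
    ring
  have h2 : HasSum (fun n : ℕ => -(1 / ((n : ℝ) + 1) ^ 2)) (-(π ^ 2 / 6)) := by
    have h3 := (hasSum_nat_add_iff' (f := fun n : ℕ => 1 / (n : ℝ) ^ 2) 1).2 hasSum_zeta_two
    have h4 : HasSum (fun b : ℕ => -(1 / ((b + 1 : ℕ) : ℝ) ^ 2))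
        (-(π ^ 2 / 6 - ∑ i ∈ Finset.range 1, 1 / (i : ℝ) ^ 2)) := h3.neg
    convert h4 using 2 with n
    · push_cast; ring
    · norm_num
  have h5 : HasSum (fun n : ℕ => ∫ v in (0:ℝ)..1, -(v ^ n / ((n : ℝ) + 1))) (-(π ^ 2 / 6)) := by
    simpa only [hc] using h2
  exact key.unique h5

lemma e1 : ∫ v in (0:ℝ)..1, v / (1 + v ^ 2) = Real.log 2 / 2 := by
  have hd : ∀ x ∈ Set.uIcc (0:ℝ) 1, HasDerivAt (fun v : ℝ => Real.log (1 + v ^ 2) / 2)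
      (x / (1 + x ^ 2)) x := by
    intro x hx
    have h1 : HasDerivAt (fun v : ℝ => 1 + v ^ 2) (2 * x) x := by
      simpa using ((hasDerivAt_pow 2 x).const_add 1)
    have h2 : (0:ℝ) < 1 + x ^ 2 := by positivity
    have h3 : HasDerivAt (fun v : ℝ => Real.log (1 + v ^ 2) / 2) (2 * x / (1 + x ^ 2) / 2) x :=
      (h1.log h2.ne').div_const 2
    convert h3 using 1
    field_simp
  have hcont : IntervalIntegrable (fun v : ℝ => v / (1 + v ^ 2)) volume 0 1 := by
    apply ContinuousOn.intervalIntegrable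
    apply ContinuousOn.div continuousOn_id (by fun_prop)
    intro x _
    positivity
  have := intervalIntegral.integral_eq_sub_of_hasDerivAt hd hcont
  rw [this]
  norm_num

lemma e2 : ∫ v in (0:ℝ)..1, 1 / (1 + v ^ 2) = π / 4 := by
  simpa [Real.arctan_one] using integral_one_div_one_add_sq (a := 0) (b := 1)

lemma innerV {t : ℝ} (ht0 : 0 < t) (ht1 : t < 1) :
    ∫ v in (0:ℝ)..1, t ^ 2 / ((1 - t * v) * (1 + t ^ 2)) =
      -(t * Real.log (1 - t) / (1 + t ^ 2)) := by
  have hsplit : (fun v : ℝ => t ^ 2 / ((1 - t * v) * (1 + t ^ 2))) =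
      fun v : ℝ => (t / (1 + t ^ 2)) * (t / (1 - t * v)) := by
    funext v
    rw [div_mul_div_comm]
    ring_nf
  rw [hsplit, intervalIntegral.integral_const_mul]
  have hinner : ∫ v in (0:ℝ)..1, t / (1 - t * v) = -Real.log (1 - t) := by
    have hd : ∀ x ∈ Set.uIcc (0:ℝ) 1, HasDerivAt (fun v : ℝ => -Real.log (1 - t * v))
        (t / (1 - t * x)) x := by
      intro x hx
      rw [Set.uIcc_of_le (by norm_num : (0:ℝ) ≤ 1)] at hx
      have hpos : (0:ℝ) < 1 - t * x := by nlinarith [hx.1, hx.2]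
      have h1 : HasDerivAt (fun v : ℝ => 1 - t * v) (-t) x := by
        simpa using ((hasDerivAt_id x).const_mul t).const_sub 1
      have h2 : HasDerivAt (fun v : ℝ => -Real.log (1 - t * v)) (-(-t / (1 - t * x))) x :=
        (h1.log hpos.ne').neg
      convert h2 using 1
      field_simp
    have hcont : IntervalIntegrable (fun v : ℝ => t / (1 - t * v)) volume 0 1 := by
      apply ContinuousOn.intervalIntegrable
      apply ContinuousOn.div continuousOn_const (by fun_prop)
      intro x hx
      rw [Set.uIcc_of_le (by norm_num : (0:ℝ) ≤ 1)] at hx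
      nlinarith [hx.1, hx.2]
    rw [intervalIntegral.integral_eq_sub_of_hasDerivAt hd hcont]
    norm_num
  rw [hinner]
  ring

lemma innerT {v : ℝ} (hv0 : 0 < v) (hv1 : v < 1) :
    ∫ t in (0:ℝ)..1, t ^ 2 / ((1 - t * v) * (1 + t ^ 2)) =
      (-Real.log (1 - v) / v - Real.log 2 / 2 * v - π / 4) / (1 + v ^ 2) := by
  set G := fun t : ℝ => (-Real.log (1 - t * v) / v - v / 2 * Real.log (1 + t ^ 2)
    - Real.arctan t) / (1 + v ^ 2) with hG
  have hv2 : (0:ℝ) < 1 + v ^ 2 := by positivity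
  have hd : ∀ x ∈ Set.uIcc (0:ℝ) 1,
      HasDerivAt G (x ^ 2 / ((1 - x * v) * (1 + x ^ 2))) x := by
    intro x hx
    rw [Set.uIcc_of_le (by norm_num : (0:ℝ) ≤ 1)] at hx
    have hpos : (0:ℝ) < 1 - x * v := by nlinarith [hx.1, hx.2]
    have hx2 : (0:ℝ) < 1 + x ^ 2 := by positivity
    have h1 : HasDerivAt (fun t : ℝ => 1 - t * v) (-v) x := by
      simpa using (((hasDerivAt_id x).mul_const v).const_sub 1)
    have hlog1 : HasDerivAt (fun t : ℝ => -Real.log (1 - t * v) / v)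
        (1 / (1 - x * v)) x := by
      have : HasDerivAt (fun t : ℝ => -Real.log (1 - t * v) / v) (-(-v / (1 - x * v)) / v) x :=
        ((h1.log hpos.ne').neg).div_const v
      convert this using 1
      field_simp
    have h2 : HasDerivAt (fun t : ℝ => 1 + t ^ 2) (2 * x) x := by
      simpa using ((hasDerivAt_pow 2 x).const_add 1)
    have hlog2 : HasDerivAt (fun t : ℝ => v / 2 * Real.log (1 + t ^ 2))
        (v * x / (1 + x ^ 2)) x := by
      have : HasDerivAt (fun t : ℝ => v / 2 * Real.log (1 + t ^ 2)) (v / 2 * (2 * x / (1 + x ^ 2))) x :=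
        (h2.log hx2.ne').const_mul (v / 2)
      convert this using 1
      field_simp
    have harc : HasDerivAt Real.arctan (1 / (1 + x ^ 2)) x := by
      simpa using Real.hasDerivAt_arctan x
    have hsum : HasDerivAt G
        ((1 / (1 - x * v) - v * x / (1 + x ^ 2) - 1 / (1 + x ^ 2)) / (1 + v ^ 2)) x :=
      (((hlog1.sub hlog2).sub harc).div_const (1 + v ^ 2))
    convert hsum using 1
    rw [div_eq_div_iff (by positivity) hv2.ne']
    field_simp
    ring
  have hcont : IntervalIntegrable
      (fun t : ℝ => t ^ 2 / ((1 - t * v) * (1 + t ^ 2))) volume 0 1 := by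
    apply ContinuousOn.intervalIntegrable
    apply ContinuousOn.div (by fun_prop) (by fun_prop)
    intro x hx
    rw [Set.uIcc_of_le (by norm_num : (0:ℝ) ≤ 1)] at hx
    have : (0:ℝ) < 1 - x * v := by nlinarith [hx.1, hx.2]
    positivity
  rw [intervalIntegral.integral_eq_sub_of_hasDerivAt hd hcont]
  simp only [hG]
  rw [Real.arctan_one]
  norm_num
  ring

/-- `∫₀¹ t·log(1−t)/(1+t²) dt = −5π²/96 + (1/8)·log² 2`. -/
theorem stmt_15 :
    ∫ t in (0:ℝ)..1, t * Real.log (1 - t) / (1 + t ^ 2) =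
      -(5 * Real.pi ^ 2) / 96 + (1 / 8) * Real.log 2 ^ 2 := by
  set I := ∫ t in (0:ℝ)..1, t * Real.log (1 - t) / (1 + t ^ 2) with hI
  set μ := volume.restrict (Set.Ioc (0:ℝ) 1) with hμ
  set f : ℝ → ℝ → ℝ := fun t v => t ^ 2 / ((1 - t * v) * (1 + t ^ 2)) with hf
  have hmeasf : Measurable (Function.uncurry f) := by
    apply Measurable.div
    · exact (measurable_fst.pow_const 2)
    · exact ((measurable_const.sub (measurable_fst.mul measurable_snd))).mul
        (measurable_const.add (measurable_fst.pow_const 2))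
  have haeIoo : ∀ᵐ x ∂μ, x ∈ Set.Ioo (0:ℝ) 1 := by
    filter_upwards [ae_restrict_mem measurableSet_Ioc, ae_restrict_of_ae ae_ne_one_s15]
      with x hx hne
    exact ⟨hx.1, lt_of_le_of_ne hx.2 hne⟩
  -- slice integrability and values
  have hslice : ∀ t ∈ Set.Ioo (0:ℝ) 1, IntegrableOn (f t) (Set.Ioc 0 1) volume := by
    intro t ht
    have : ContinuousOn (f t) (Set.Icc 0 1) := by
      apply ContinuousOn.div (by fun_prop) (by fun_prop)
      intro v hv
      have : (0:ℝ) < 1 - t * v := by nlinarith [ht.1, ht.2, hv.1, hv.2]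
      positivity
    exact (this.integrableOn_Icc).mono_set Set.Ioc_subset_Icc_self
  have hnorm_eq : ∀ t ∈ Set.Ioo (0:ℝ) 1,
      (∫ v, ‖f t v‖ ∂μ) = -(t * Real.log (1 - t) / (1 + t ^ 2)) := by
    intro t ht
    have h1 : (∫ v, ‖f t v‖ ∂μ) = ∫ v, f t v ∂μ := by
      apply MeasureTheory.integral_congr_ae
      filter_upwards [ae_restrict_mem measurableSet_Ioc] with v hv
      have hd : (0:ℝ) < 1 - t * v := by nlinarith [ht.1, ht.2, hv.1, hv.2]
      have : 0 ≤ f t v := by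
        apply div_nonneg (by positivity) (by positivity)
      exact abs_of_nonneg this
    rw [h1, hμ, ← intervalIntegral.integral_of_le (by norm_num : (0:ℝ) ≤ 1)]
    exact innerV ht.1 ht.2
  -- product integrability
  have hprod : Integrable (Function.uncurry f) (μ.prod μ) := by
    rw [MeasureTheory.integrable_prod_iff hmeasf.aestronglyMeasurable]
    constructor
    · filter_upwards [haeIoo] with t ht
      exact hslice t ht
    · apply MeasureTheory.Integrable.congr (f := fun t => -(t * Real.log (1 - t) / (1 + t ^ 2)))
      · exact (int_main.1).neg
      · filter_upwards [haeIoo] with t ht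
        exact (hnorm_eq t ht).symm
  have hswap := MeasureTheory.integral_integral_swap (f := f) hprod
  -- left side equals -I
  have hleft : (∫ t, ∫ v, f t v ∂μ ∂μ) = -I := by
    have h1 : (∫ t, ∫ v, f t v ∂μ ∂μ) = ∫ t, -(t * Real.log (1 - t) / (1 + t ^ 2)) ∂μ := by
      apply MeasureTheory.integral_congr_ae
      filter_upwards [haeIoo] with t ht
      rw [hμ, ← intervalIntegral.integral_of_le (by norm_num : (0:ℝ) ≤ 1)]
      exact innerV ht.1 ht.2
    rw [h1, hI, intervalIntegral.integral_of_le (by norm_num : (0:ℝ) ≤ 1)]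
    exact MeasureTheory.integral_neg _
  -- right side
  have hright : (∫ v, ∫ t, f t v ∂μ ∂μ) =
      ∫ v in (0:ℝ)..1, (-Real.log (1 - v) / v - Real.log 2 / 2 * v - π / 4) / (1 + v ^ 2) := by
    rw [intervalIntegral.integral_of_le (by norm_num : (0:ℝ) ≤ 1)]
    apply MeasureTheory.integral_congr_ae
    filter_upwards [haeIoo] with v hv
    rw [hμ, ← intervalIntegral.integral_of_le (by norm_num : (0:ℝ) ≤ 1)]
    exact innerT hv.1 hv.2
  -- evaluate the right side
  have hq1 : IntervalIntegrable (fun v : ℝ => -(Real.log (1 - v) / v)) volume 0 1 :=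
    int_logdiv.neg
  have hq3 : IntervalIntegrable (fun v : ℝ => (-(Real.log 2 / 2)) * (v / (1 + v ^ 2)))
      volume 0 1 := by
    apply ContinuousOn.intervalIntegrable
    apply ContinuousOn.mul continuousOn_const
    apply ContinuousOn.div continuousOn_id (by fun_prop)
    intro x _; positivity
  have hq4 : IntervalIntegrable (fun v : ℝ => (-(π / 4)) * (1 / (1 + v ^ 2))) volume 0 1 := by
    apply ContinuousOn.intervalIntegrable
    apply ContinuousOn.mul continuousOn_const
    apply ContinuousOn.div continuousOn_const (by fun_prop)
    intro x _; positivity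
  have hsplit : (∫ v in (0:ℝ)..1,
      (-Real.log (1 - v) / v - Real.log 2 / 2 * v - π / 4) / (1 + v ^ 2)) =
      ∫ v in (0:ℝ)..1, (-(Real.log (1 - v) / v) + v * Real.log (1 - v) / (1 + v ^ 2)
        + (-(Real.log 2 / 2)) * (v / (1 + v ^ 2)) + (-(π / 4)) * (1 / (1 + v ^ 2))) := by
    apply intervalIntegral.integral_congr_ae
    filter_upwards [ae_ne_one_s15] with v hne hv
    rw [Set.uIoc_of_le (by norm_num : (0:ℝ) ≤ 1)] at hv
    have hv0 : (0:ℝ) < v := hv.1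
    have hv1 : v < 1 := lt_of_le_of_ne hv.2 hne
    have h2 : (0:ℝ) < 1 + v ^ 2 := by positivity
    field_simp
    ring
  have hval : (∫ v in (0:ℝ)..1,
      (-Real.log (1 - v) / v - Real.log 2 / 2 * v - π / 4) / (1 + v ^ 2)) =
      π ^ 2 / 6 + I + (-(Real.log 2 / 2)) * (Real.log 2 / 2) + (-(π / 4)) * (π / 4) := by
    rw [hsplit, intervalIntegral.integral_add ((hq1.add int_main).add hq3) hq4,
      intervalIntegral.integral_add (hq1.add int_main) hq3,
      intervalIntegral.integral_add hq1 int_main,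
      intervalIntegral.integral_neg, atomA,
      intervalIntegral.integral_const_mul, intervalIntegral.integral_const_mul, e1, e2]
    rw [hI]
    ring
  have heq : -I = π ^ 2 / 6 + I + (-(Real.log 2 / 2)) * (Real.log 2 / 2) + (-(π / 4)) * (π / 4) := by
    rw [← hval, ← hright, ← hswap, hleft]
  nlinarith [heq]
end
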